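/- arXiv:2004.02685 — 2 statements merged into one kernel-verified Lean document; each statement's English description precedes it below -/
import Mathlib

section
/- Conservation for the first-order (forward Euler) fully discrete DG scheme: let (C_n^m)_{0 ≤ n ≤ N_H−1, m ≥ 0}, (E^m)_{m ≥ 0}, (Φ^m)_{m ≥ 0} in V_h^k satisfy, for every m ≥ 0: (i) for each n ≠ 2, each cell I_j and each polynomial φ of degree ≤ k, (1/Δt)∫_{I_j}(C_n^{m+1} − C_n^m)φ dx + a_n^j(g_n^m, φ) + b_n^j(C^m, E^m, Φ^m, φ) = 0; (ii) (E^{m}, Φ^{m}) solves the DG Poisson scheme with source C_0^{m} for every m; (iii) with E^{m+1/2} = (E^m + E^{m+1})/2 and Φ^{m+1/2} = (Φ^m + Φ^{m+1})/2, the C_2 update (1/Δt)∫_{I_j}(C_2^{m+1} − C_2^m)φ dx + a_2^j(g_2^m, φ) + b_2^j(C^m, E^{m+1/2}, Φ^{m+1/2}, φ) = 0 holds for every cell and test polynomial. Then for every m ≥ 0: ∫_0^L C_0^m dx = ∫_0^L C_0^0 dx, ∫_0^L C_1^m dx = ∫_0^L C_1^0 dx, and the discrete total energy ℰ_h^m :=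 (1/2)∫_0^L [ v_th³ (√2 C_2^m + C_0^m) + (E^m)² ] dx + (β/2) Σ_j ([Φ^m]_{j−1/2})² satisfies ℰ_h^m = ℰ_h^0. -/
open MeasureTheory Finset

noncomputable section

/-- Left (minus) one-sided limit of the piecewise polynomial with cell
polynomials `u 0, …, u (Nx−1)` at the interface `x_{i+1/2} = X i`
(interfaces `i = 0` and `i = Nx` are identified periodically). -/
def dgMinus (Nx : ℕ) (X : ℕ → ℝ) (u : ℕ → Polynomial ℝ) (i : ℕ) : ℝ :=
  if i = 0 then (u (Nx - 1)).eval (X Nx) else (u (i - 1)).eval (X i)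

/-- Right (plus) one-sided limit at the interface `X i` (periodic). -/
def dgPlus (Nx : ℕ) (X : ℕ → ℝ) (u : ℕ → Polynomial ℝ) (i : ℕ) : ℝ :=
  if i = Nx then (u 0).eval (X 0) else (u i).eval (X i)

/-- Jump `[u] = u⁺ − u⁻` at the interface `X i`. -/
def dgJump (Nx : ℕ) (X : ℕ → ℝ) (u : ℕ → Polynomial ℝ) (i : ℕ) : ℝ :=
  dgPlus Nx X u i - dgMinus Nx X u i

/-- Average `{u} = (u⁺ + u⁻)/2` at the interface `X i`. -/
def dgAvg (Nx : ℕ) (X : ℕ → ℝ) (u : ℕ → Polynomial ℝ) (i : ℕ) : ℝ :=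
  (dgPlus Nx X u i + dgMinus Nx X u i) / 2

/-- Integral over the cell `I_j = (X j, X (j+1))`. -/
def cellInt (X : ℕ → ℝ) (j : ℕ) (f : ℝ → ℝ) : ℝ :=
  ∫ x in (X j)..(X (j + 1)), f x

/-- `g_n = v_th (√(n+1) C_{n+1} + √n C_{n−1})` on each cell (the convention
`C_{−1} = 0` is handled by `√0 = 0` and truncated subtraction). -/
def dgG (vth : ℝ) (Cf : ℕ → ℕ → Polynomial ℝ) (n j : ℕ) : Polynomial ℝ :=
  vth • (Real.sqrt (n + 1) • Cf (n + 1) j + Real.sqrt n • Cf (n - 1) j)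

/-- Global Lax–Friedrichs flux
`ĝ_n = (1/2)(g_n⁻ + g_n⁺ − α (C_n⁺ − C_n⁻))` with `α = v_th √N_H`. -/
def dgGhat (vth : ℝ) (NH Nx : ℕ) (X : ℕ → ℝ) (Cf : ℕ → ℕ → Polynomial ℝ)
    (n i : ℕ) : ℝ :=
  (1 / 2) * (dgMinus Nx X (dgG vth Cf n) i + dgPlus Nx X (dgG vth Cf n) i
    - vth * Real.sqrt NH *
        (dgPlus Nx X (Cf n) i - dgMinus Nx X (Cf n) i))

/-- `Ĉ_1 = ĝ_0 / v_th`. -/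
def dgC1hat (vth : ℝ) (NH Nx : ℕ) (X : ℕ → ℝ) (Cf : ℕ → ℕ → Polynomial ℝ)
    (i : ℕ) : ℝ :=
  dgGhat vth NH Nx X Cf 0 i / vth

/-- The convective DG form
`a_n^j(g_n, φ) = −∫_{I_j} g_n φ' + ĝ_{n,j+1/2} φ(x_{j+1/2}⁻) − ĝ_{n,j−1/2} φ(x_{j−1/2}⁺)`. -/
def dgA (vth : ℝ) (NH Nx : ℕ) (X : ℕ → ℝ) (Cf : ℕ → ℕ → Polynomial ℝ)
    (n j : ℕ) (φ : Polynomial ℝ) : ℝ :=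
  -(cellInt X j fun x => (dgG vth Cf n j).eval x * φ.derivative.eval x)
    + dgGhat vth NH Nx X Cf n (j + 1) * φ.eval (X (j + 1))
    - dgGhat vth NH Nx X Cf n j * φ.eval (X j)

/-- The residual `⟨r_1^j, φ⟩`. -/
def dgR1 (vth β : ℝ) (Nx : ℕ) (X : ℕ → ℝ) (Ef Φf : ℕ → Polynomial ℝ)
    (j : ℕ) (φ : Polynomial ℝ) : ℝ :=
  -(β / (2 * vth ^ 2)) *
    ((dgJump Nx X Φf j * dgJump Nx X Ef j) * φ.eval (X j)
      + (dgJump Nx X Φf (j + 1) * dgJump Nx X Ef (j + 1)) * φ.eval (X (j + 1)))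

/-- The residual `⟨r_2^j, φ⟩`. -/
def dgR2 (vth : ℝ) (NH Nx : ℕ) (X : ℕ → ℝ) (Cf : ℕ → ℕ → Polynomial ℝ)
    (Φf : ℕ → Polynomial ℝ) (j : ℕ) (φ : Polynomial ℝ) : ℝ :=
  (1 / (Real.sqrt 2 * vth)) *
    ((dgAvg Nx X (Cf 1) j - dgC1hat vth NH Nx X Cf j) * dgJump Nx X Φf j *
        φ.eval (X j)
      + (dgAvg Nx X (Cf 1) (j + 1) - dgC1hat vth NH Nx X Cf (j + 1)) *
          dgJump Nx X Φf (j + 1) * φ.eval (X (j + 1)))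

/-- The residual `⟨r_n^j, φ⟩` (zero for `n ∉ {1, 2}`). -/
def dgR (vth β : ℝ) (NH Nx : ℕ) (X : ℕ → ℝ) (Cf : ℕ → ℕ → Polynomial ℝ)
    (Ef Φf : ℕ → Polynomial ℝ) (n j : ℕ) (φ : Polynomial ℝ) : ℝ :=
  if n = 1 then dgR1 vth β Nx X Ef Φf j φ
  else if n = 2 then dgR2 vth NH Nx X Cf Φf j φ
  else 0

/-- The source form `b_n^j(C, E, Φ, φ) = −(√n/v_th) ∫_{I_j} E C_{n−1} φ − ⟨r_n^j, φ⟩`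
(for `n = 0` this is `0` since `√0 = 0` and `r_0 = 0`). -/
def dgB (vth β : ℝ) (NH Nx : ℕ) (X : ℕ → ℝ) (Cf : ℕ → ℕ → Polynomial ℝ)
    (Ef Φf : ℕ → Polynomial ℝ) (n j : ℕ) (φ : Polynomial ℝ) : ℝ :=
  -(Real.sqrt n / vth) *
      (cellInt X j fun x => (Ef j).eval x * (Cf (n - 1) j).eval x * φ.eval x)
    - dgR vth β NH Nx X Cf Ef Φf n j φ

/-- The local DG scheme for the Poisson equation with source `C_0`, with
fluxes `Φ̂ = {Φ}` and `Ê = {E} − β [Φ]`. -/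
def dgPoisson (vth ρ0 β : ℝ) (k Nx : ℕ) (X : ℕ → ℝ)
    (C0f Ef Φf : ℕ → Polynomial ℝ) : Prop :=
  ∀ j < Nx, ∀ ψ : Polynomial ℝ, ψ.natDegree ≤ k →
    ((cellInt X j fun x => (Φf j).eval x * ψ.derivative.eval x)
        - dgAvg Nx X Φf (j + 1) * ψ.eval (X (j + 1))
        + dgAvg Nx X Φf j * ψ.eval (X j)
      = cellInt X j fun x => (Ef j).eval x * ψ.eval x)
    ∧ (-(cellInt X j fun x => (Ef j).eval x * ψ.derivative.eval x)
        + (dgAvg Nx X Ef (j + 1) - β * dgJump Nx X Φf (j + 1)) *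
            ψ.eval (X (j + 1))
        - (dgAvg Nx X Ef j - β * dgJump Nx X Φf j) * ψ.eval (X j)
      = cellInt X j fun x => (vth * (C0f j).eval x - ρ0) * ψ.eval x)

/-- `∫_0^L u dx` for a piecewise polynomial `u`. -/
def dgTotInt (Nx : ℕ) (X : ℕ → ℝ) (u : ℕ → Polynomial ℝ) : ℝ :=
  ∑ j ∈ Finset.range Nx, cellInt X j fun x => (u j).eval x

/-- The discrete total energy
`ℰ_h = (1/2) ∫_0^L [v_th³(√2 C_2 + C_0) + E²] dx + (β/2) Σ_j [Φ]_{j−1/2}²`. -/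
def dgEnergy (vth β : ℝ) (Nx : ℕ) (X : ℕ → ℝ) (Cf : ℕ → ℕ → Polynomial ℝ)
    (Ef Φf : ℕ → Polynomial ℝ) : ℝ :=
  (1 / 2) * ∑ j ∈ Finset.range Nx,
      (cellInt X j fun x =>
        vth ^ 3 * (Real.sqrt 2 * (Cf 2 j).eval x + (Cf 0 j).eval x)
          + ((Ef j).eval x) ^ 2)
    + (β / 2) * ∑ j ∈ Finset.range Nx, (dgJump Nx X Φf j) ^ 2

end

noncomputable section

namespace DGAux

/-- Integral of a polynomial over a cell. -/
def pint (X : ℕ → ℝ) (j : ℕ) (p : Polynomial ℝ) : ℝ :=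
  cellInt X j fun x => p.eval x

lemma cellInt_congr {X : ℕ → ℝ} {j : ℕ} {f g : ℝ → ℝ} (h : ∀ x, f x = g x) :
    cellInt X j f = cellInt X j g := by
  unfold cellInt; congr 1; funext x; exact h x

lemma cellInt_eq_pint {X : ℕ → ℝ} {j : ℕ} {f : ℝ → ℝ} (p : Polynomial ℝ)
    (h : ∀ x, f x = p.eval x) : cellInt X j f = pint X j p :=
  cellInt_congr h

lemma pint_congr {X : ℕ → ℝ} {j : ℕ} {p q : Polynomial ℝ} (h : p = q) :
    pint X j p = pint X j q := by rw [h]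

lemma pint_add (X : ℕ → ℝ) (j : ℕ) (p q : Polynomial ℝ) :
    pint X j (p + q) = pint X j p + pint X j q := by
  unfold pint cellInt
  simp only [Polynomial.eval_add]
  exact intervalIntegral.integral_add
    ((p.continuous_aeval).intervalIntegrable _ _)
    ((q.continuous_aeval).intervalIntegrable _ _)

lemma pint_smul (X : ℕ → ℝ) (j : ℕ) (c : ℝ) (p : Polynomial ℝ) :
    pint X j (c • p) = c * pint X j p := by
  unfold pint cellInt
  simp only [Polynomial.eval_smul, smul_eq_mul]
  exact intervalIntegral.integral_const_mul c _

lemma pint_sub (X : ℕ → ℝ) (j : ℕ) (p q : Polynomial ℝ) :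
    pint X j (p - q) = pint X j p - pint X j q := by
  have := pint_add X j q (p - q)
  simp only [add_sub_cancel] at this
  linarith

lemma pint_deriv (X : ℕ → ℝ) (j : ℕ) (p : Polynomial ℝ) :
    pint X j p.derivative = p.eval (X (j + 1)) - p.eval (X j) := by
  unfold pint cellInt
  have h1 : ∀ x ∈ Set.uIcc (X j) (X (j + 1)), DifferentiableAt ℝ (fun y => p.eval y) x :=
    fun x _ => p.differentiable.differentiableAt
  have h2 : deriv (fun y => p.eval y) = fun y => p.derivative.eval y := by
    funext y; exact Polynomial.deriv p
  rw [show (fun x => p.derivative.eval x) = deriv (fun y => p.eval y) from h2.symm]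
  exact intervalIntegral.integral_deriv_eq_sub h1 (by
    rw [h2]; exact (p.derivative.continuous_aeval).intervalIntegrable _ _)

end DGAux
end

noncomputable section
namespace DGAux

variable {Nx : ℕ} {X : ℕ → ℝ}

lemma dgMinus_periodic (hNx : 1 ≤ Nx) (u : ℕ → Polynomial ℝ) :
    dgMinus Nx X u Nx = dgMinus Nx X u 0 := by
  unfold dgMinus
  rw [if_neg (by omega), if_pos rfl]

lemma dgPlus_periodic (hNx : 1 ≤ Nx) (u : ℕ → Polynomial ℝ) :
    dgPlus Nx X u Nx = dgPlus Nx X u 0 := by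
  unfold dgPlus
  rw [if_pos rfl, if_neg (by omega : ¬(0 = Nx))]

lemma dgJump_periodic (hNx : 1 ≤ Nx) (u : ℕ → Polynomial ℝ) :
    dgJump Nx X u Nx = dgJump Nx X u 0 := by
  unfold dgJump; rw [dgMinus_periodic hNx, dgPlus_periodic hNx]

lemma dgAvg_periodic (hNx : 1 ≤ Nx) (u : ℕ → Polynomial ℝ) :
    dgAvg Nx X u Nx = dgAvg Nx X u 0 := by
  unfold dgAvg; rw [dgMinus_periodic hNx, dgPlus_periodic hNx]

lemma dgGhat_periodic (hNx : 1 ≤ Nx) (vth : ℝ) (NH : ℕ)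
    (Cf : ℕ → ℕ → Polynomial ℝ) (n : ℕ) :
    dgGhat vth NH Nx X Cf n Nx = dgGhat vth NH Nx X Cf n 0 := by
  unfold dgGhat
  rw [dgMinus_periodic hNx, dgPlus_periodic hNx, dgMinus_periodic hNx,
    dgPlus_periodic hNx]

lemma dgC1hat_periodic (hNx : 1 ≤ Nx) (vth : ℝ) (NH : ℕ)
    (Cf : ℕ → ℕ → Polynomial ℝ) :
    dgC1hat vth NH Nx X Cf Nx = dgC1hat vth NH Nx X Cf 0 := by
  unfold dgC1hat; rw [dgGhat_periodic hNx]

lemma eval_eq_dgMinus (u : ℕ → Polynomial ℝ) (j : ℕ) :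
    (u j).eval (X (j + 1)) = dgMinus Nx X u (j + 1) := by
  unfold dgMinus; rw [if_neg (by omega)]; norm_num

lemma eval_eq_dgPlus (u : ℕ → Polynomial ℝ) {j : ℕ} (hj : j < Nx) :
    (u j).eval (X j) = dgPlus Nx X u j := by
  unfold dgPlus; rw [if_neg (by omega)]

lemma dgPlus_mul (p q : ℕ → Polynomial ℝ) (i : ℕ) :
    dgPlus Nx X (fun j => p j * q j) i = dgPlus Nx X p i * dgPlus Nx X q i := by
  unfold dgPlus; split <;> simp

lemma dgMinus_mul (p q : ℕ → Polynomial ℝ) (i : ℕ) :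
    dgMinus Nx X (fun j => p j * q j) i = dgMinus Nx X p i * dgMinus Nx X q i := by
  unfold dgMinus; split <;> simp

lemma dgJump_mul (p q : ℕ → Polynomial ℝ) (i : ℕ) :
    dgJump Nx X (fun j => p j * q j) i
      = dgAvg Nx X p i * dgJump Nx X q i + dgJump Nx X p i * dgAvg Nx X q i := by
  unfold dgJump dgAvg
  rw [dgPlus_mul, dgMinus_mul]; ring

lemma dgPlus_add (p q : ℕ → Polynomial ℝ) (i : ℕ) :
    dgPlus Nx X (fun j => p j + q j) i = dgPlus Nx X p i + dgPlus Nx X q i := by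
  unfold dgPlus; split <;> simp

lemma dgMinus_add (p q : ℕ → Polynomial ℝ) (i : ℕ) :
    dgMinus Nx X (fun j => p j + q j) i = dgMinus Nx X p i + dgMinus Nx X q i := by
  unfold dgMinus; split <;> simp

lemma dgPlus_smul (c : ℝ) (p : ℕ → Polynomial ℝ) (i : ℕ) :
    dgPlus Nx X (fun j => c • p j) i = c * dgPlus Nx X p i := by
  unfold dgPlus; split <;> simp

lemma dgMinus_smul (c : ℝ) (p : ℕ → Polynomial ℝ) (i : ℕ) :
    dgMinus Nx X (fun j => c • p j) i = c * dgMinus Nx X p i := by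
  unfold dgMinus; split <;> simp

lemma dgJump_add (p q : ℕ → Polynomial ℝ) (i : ℕ) :
    dgJump Nx X (fun j => p j + q j) i = dgJump Nx X p i + dgJump Nx X q i := by
  unfold dgJump; rw [dgPlus_add, dgMinus_add]; ring

lemma dgJump_smul (c : ℝ) (p : ℕ → Polynomial ℝ) (i : ℕ) :
    dgJump Nx X (fun j => c • p j) i = c * dgJump Nx X p i := by
  unfold dgJump; rw [dgPlus_smul, dgMinus_smul]; ring

lemma dgAvg_add (p q : ℕ → Polynomial ℝ) (i : ℕ) :
    dgAvg Nx X (fun j => p j + q j) i = dgAvg Nx X p i + dgAvg Nx X q i := by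
  unfold dgAvg; rw [dgPlus_add, dgMinus_add]; ring

lemma dgAvg_smul (c : ℝ) (p : ℕ → Polynomial ℝ) (i : ℕ) :
    dgAvg Nx X (fun j => c • p j) i = c * dgAvg Nx X p i := by
  unfold dgAvg; rw [dgPlus_smul, dgMinus_smul]; ring

lemma sum_shift (Nx : ℕ) (F : ℕ → ℝ) (h : F Nx = F 0) :
    ∑ j ∈ Finset.range Nx, F (j + 1) = ∑ j ∈ Finset.range Nx, F j := by
  have h1 := Finset.sum_range_succ F Nx
  have h2 := Finset.sum_range_succ' F Nx
  rw [h1] at h2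
  linarith [h2]

/-- Key interface summation lemma: flux differences sum to minus the
sum of flux times jumps (periodic). -/
lemma sum_flux (hNx : 1 ≤ Nx) (G : ℕ → ℝ) (hG : G Nx = G 0)
    (u : ℕ → Polynomial ℝ) :
    ∑ j ∈ Finset.range Nx,
      (G (j + 1) * (u j).eval (X (j + 1)) - G j * (u j).eval (X j))
    = -∑ i ∈ Finset.range Nx, G i * dgJump Nx X u i := by
  have step : ∀ j ∈ Finset.range Nx,
      G (j + 1) * (u j).eval (X (j + 1)) - G j * (u j).eval (X j)
      = (fun i => G i * dgMinus Nx X u i) (j + 1) - G j * dgPlus Nx X u j := by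
    intro j hj
    rw [eval_eq_dgMinus u j, eval_eq_dgPlus u (Finset.mem_range.mp hj)]
  rw [Finset.sum_congr rfl step, Finset.sum_sub_distrib,
    sum_shift Nx (fun i => G i * dgMinus Nx X u i)
      (by simp [dgMinus_periodic hNx, hG]),
    ← Finset.sum_sub_distrib, ← Finset.sum_neg_distrib]
  apply Finset.sum_congr rfl
  intro i _
  unfold dgJump; ring

/-- Interface summation with plus signs: gives twice the averages. -/
lemma sum_flux' (hNx : 1 ≤ Nx) (G : ℕ → ℝ) (hG : G Nx = G 0)
    (u : ℕ → Polynomial ℝ) :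
    ∑ j ∈ Finset.range Nx,
      (G (j + 1) * (u j).eval (X (j + 1)) + G j * (u j).eval (X j))
    = ∑ i ∈ Finset.range Nx, G i * (2 * dgAvg Nx X u i) := by
  have step : ∀ j ∈ Finset.range Nx,
      G (j + 1) * (u j).eval (X (j + 1)) + G j * (u j).eval (X j)
      = (fun i => G i * dgMinus Nx X u i) (j + 1) + G j * dgPlus Nx X u j := by
    intro j hj
    rw [eval_eq_dgMinus u j, eval_eq_dgPlus u (Finset.mem_range.mp hj)]
  rw [Finset.sum_congr rfl step, Finset.sum_add_distrib,
    sum_shift Nx (fun i => G i * dgMinus Nx X u i)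
      (by simp [dgMinus_periodic hNx, hG]),
    ← Finset.sum_add_distrib]
  apply Finset.sum_congr rfl
  intro i _
  unfold dgAvg; ring

/-- Summed integration by parts. -/
lemma sum_ibp (hNx : 1 ≤ Nx) (p : ℕ → Polynomial ℝ) :
    ∑ j ∈ Finset.range Nx, pint X j (p j).derivative
    = -∑ i ∈ Finset.range Nx, dgJump Nx X p i := by
  have h := sum_flux (X := X) hNx (fun _ => (1 : ℝ)) rfl p
  simp only [one_mul] at h
  rw [← h]
  apply Finset.sum_congr rfl
  intro j _
  rw [pint_deriv]

end DGAux
end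
noncomputable section
namespace DGAux

variable {Nx : ℕ} {X : ℕ → ℝ}

lemma dgJump_one (i : ℕ) : dgJump Nx X (fun _ => (1 : Polynomial ℝ)) i = 0 := by
  unfold dgJump dgPlus dgMinus; split <;> split <;> simp

lemma pint_zero (j : ℕ) : pint X j 0 = 0 := by
  unfold pint cellInt; simp

/-- Sum of the convective forms against a family of piecewise tests. -/
lemma sum_dgA (hNx : 1 ≤ Nx) (vth : ℝ) (NH : ℕ) (Cf : ℕ → ℕ → Polynomial ℝ)
    (n : ℕ) (u : ℕ → Polynomial ℝ) :
    ∑ j ∈ Finset.range Nx, dgA vth NH Nx X Cf n j (u j)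
    = -∑ j ∈ Finset.range Nx, pint X j (dgG vth Cf n j * (u j).derivative)
      - ∑ i ∈ Finset.range Nx, dgGhat vth NH Nx X Cf n i * dgJump Nx X u i := by
  have step : ∀ j ∈ Finset.range Nx, dgA vth NH Nx X Cf n j (u j)
      = -pint X j (dgG vth Cf n j * (u j).derivative)
        + (dgGhat vth NH Nx X Cf n (j + 1) * (u j).eval (X (j + 1))
          - dgGhat vth NH Nx X Cf n j * (u j).eval (X j)) := by
    intro j _
    unfold dgA
    rw [cellInt_eq_pint (dgG vth Cf n j * (u j).derivative) (fun x => by simp)]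
    ring
  rw [Finset.sum_congr rfl step, Finset.sum_add_distrib,
    sum_flux hNx _ (dgGhat_periodic hNx vth NH Cf n) u]
  rw [Finset.sum_neg_distrib]
  ring

lemma sum_dgA_one (hNx : 1 ≤ Nx) (vth : ℝ) (NH : ℕ) (Cf : ℕ → ℕ → Polynomial ℝ)
    (n : ℕ) :
    ∑ j ∈ Finset.range Nx, dgA vth NH Nx X Cf n j 1 = 0 := by
  have h := sum_dgA (X := X) hNx vth NH Cf n (fun _ => 1)
  simp only [dgJump_one, mul_zero, Finset.sum_const_zero, Polynomial.derivative_one,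
    mul_zero, sub_zero] at h
  rw [h]
  simp [pint_zero]

lemma dgB_zero_eq (vth β : ℝ) (NH : ℕ) (Cf : ℕ → ℕ → Polynomial ℝ)
    (Ef Φf : ℕ → Polynomial ℝ) (j : ℕ) (φ : Polynomial ℝ) :
    dgB vth β NH Nx X Cf Ef Φf 0 j φ = 0 := by
  unfold dgB dgR
  norm_num

/-- Paired-endpoint interface sums. -/
lemma sum_pair (hNx : 1 ≤ Nx) (F : ℕ → ℝ) (hF : F Nx = F 0) :
    ∑ j ∈ Finset.range Nx, (F j + F (j + 1)) = 2 * ∑ j ∈ Finset.range Nx, F j := by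
  rw [Finset.sum_add_distrib, sum_shift Nx F hF]; ring

lemma sum_pint_comm (p q : ℕ → Polynomial ℝ) :
    ∑ j ∈ Finset.range Nx, pint X j (p j * q j)
      = ∑ j ∈ Finset.range Nx, pint X j (q j * p j) := by
  exact Finset.sum_congr rfl fun j _ => pint_congr (mul_comm _ _)

/-- First Poisson equation summed against a piecewise test family. -/
lemma poisson1_sum {vth ρ0 β : ℝ} {k : ℕ} (hNx : 1 ≤ Nx)
    {C0f Ef Φf : ℕ → Polynomial ℝ}
    (hP : dgPoisson vth ρ0 β k Nx X C0f Ef Φf)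
    (ψ : ℕ → Polynomial ℝ) (hψ : ∀ j, (ψ j).natDegree ≤ k) :
    ∑ j ∈ Finset.range Nx, pint X j (Φf j * (ψ j).derivative)
      + ∑ i ∈ Finset.range Nx, dgAvg Nx X Φf i * dgJump Nx X ψ i
    = ∑ j ∈ Finset.range Nx, pint X j (Ef j * ψ j) := by
  have step : ∀ j ∈ Finset.range Nx,
      pint X j (Ef j * ψ j)
      = pint X j (Φf j * (ψ j).derivative)
        - (dgAvg Nx X Φf (j + 1) * (ψ j).eval (X (j + 1))
            - dgAvg Nx X Φf j * (ψ j).eval (X j)) := by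
    intro j hj
    have h := (hP j (Finset.mem_range.mp hj) (ψ j) (hψ j)).1
    rw [cellInt_eq_pint (Φf j * (ψ j).derivative) (fun x => by simp),
      cellInt_eq_pint (Ef j * ψ j) (fun x => by simp)] at h
    linarith
  rw [Finset.sum_congr rfl step, Finset.sum_sub_distrib,
    sum_flux hNx _ (dgAvg_periodic hNx Φf) ψ]
  ring

/-- Second Poisson equation summed against a piecewise test family. -/
lemma poisson2_sum {vth ρ0 β : ℝ} {k : ℕ} (hNx : 1 ≤ Nx)
    {C0f Ef Φf : ℕ → Polynomial ℝ}
    (hP : dgPoisson vth ρ0 β k Nx X C0f Ef Φf)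
    (ζ : ℕ → Polynomial ℝ) (hζ : ∀ j, (ζ j).natDegree ≤ k) :
    -∑ j ∈ Finset.range Nx, pint X j (Ef j * (ζ j).derivative)
      - ∑ i ∈ Finset.range Nx, dgAvg Nx X Ef i * dgJump Nx X ζ i
      + β * ∑ i ∈ Finset.range Nx, dgJump Nx X Φf i * dgJump Nx X ζ i
    = vth * ∑ j ∈ Finset.range Nx, pint X j (C0f j * ζ j)
      - ρ0 * ∑ j ∈ Finset.range Nx, pint X j (ζ j) := by
  have step : ∀ j ∈ Finset.range Nx,
      (vth • (C0f j * ζ j) - ρ0 • ζ j : Polynomial ℝ) = (vth • C0f j - Polynomial.C ρ0) * ζ j := by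
    intro j _
    simp only [Polynomial.smul_eq_C_mul]
    ring
  have key : ∀ j ∈ Finset.range Nx,
      vth * pint X j (C0f j * ζ j) - ρ0 * pint X j (ζ j)
      = -pint X j (Ef j * (ζ j).derivative)
        + ((dgAvg Nx X Ef (j + 1) - β * dgJump Nx X Φf (j + 1)) * (ζ j).eval (X (j + 1))
          - (dgAvg Nx X Ef j - β * dgJump Nx X Φf j) * (ζ j).eval (X j)) := by
    intro j hj
    have h := (hP j (Finset.mem_range.mp hj) (ζ j) (hζ j)).2
    rw [cellInt_eq_pint (Ef j * (ζ j).derivative) (fun x => by simp),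
      cellInt_eq_pint ((vth • C0f j - Polynomial.C ρ0) * ζ j) (fun x => by simp)] at h
    rw [← step j hj, pint_sub, pint_smul, pint_smul] at h
    linarith
  have hsum := Finset.sum_congr rfl key
  rw [Finset.sum_sub_distrib, ← Finset.mul_sum, ← Finset.mul_sum,
    Finset.sum_add_distrib,
    sum_flux hNx (fun i => dgAvg Nx X Ef i - β * dgJump Nx X Φf i) (by
      show dgAvg Nx X Ef Nx - β * dgJump Nx X Φf Nx = _
      rw [dgAvg_periodic hNx Ef, dgJump_periodic hNx Φf]) ζ] at hsum
  have hsplit : ∑ i ∈ Finset.range Nx,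
      (dgAvg Nx X Ef i - β * dgJump Nx X Φf i) * dgJump Nx X ζ i
      = ∑ i ∈ Finset.range Nx, dgAvg Nx X Ef i * dgJump Nx X ζ i
        - β * ∑ i ∈ Finset.range Nx, dgJump Nx X Φf i * dgJump Nx X ζ i := by
    rw [Finset.sum_congr rfl (fun i (_ : i ∈ Finset.range Nx) =>
      (by ring : (dgAvg Nx X Ef i - β * dgJump Nx X Φf i) * dgJump Nx X ζ i
        = dgAvg Nx X Ef i * dgJump Nx X ζ i
          - β * (dgJump Nx X Φf i * dgJump Nx X ζ i))),
      Finset.sum_sub_distrib, Finset.mul_sum]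
  rw [Finset.sum_neg_distrib] at hsum
  linarith [hsum, hsplit]

/-- Summed integration by parts for products of piecewise polynomials. -/
lemma ibp_sum (hNx : 1 ≤ Nx) (p q : ℕ → Polynomial ℝ) :
    ∑ j ∈ Finset.range Nx, pint X j (p j * (q j).derivative)
      + ∑ j ∈ Finset.range Nx, pint X j ((p j).derivative * q j)
    = -∑ i ∈ Finset.range Nx, dgAvg Nx X p i * dgJump Nx X q i
      - ∑ i ∈ Finset.range Nx, dgJump Nx X p i * dgAvg Nx X q i := by
  have h := sum_ibp (X := X) hNx (fun j => p j * q j)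
  have h2 : ∀ j ∈ Finset.range Nx,
      pint X j ((fun j => p j * q j) j).derivative
      = pint X j ((p j).derivative * q j) + pint X j (p j * (q j).derivative) := by
    intro j _
    rw [show ((fun j => p j * q j) j).derivative
        = (p j).derivative * q j + p j * (q j).derivative from Polynomial.derivative_mul,
      pint_add]
  rw [Finset.sum_congr rfl h2, Finset.sum_add_distrib] at h
  have h3 : ∑ i ∈ Finset.range Nx,
        (dgAvg Nx X p i * dgJump Nx X q i + dgJump Nx X p i * dgAvg Nx X q i)
      = ∑ i ∈ Finset.range Nx, dgJump Nx X (fun j => p j * q j) i :=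
    Finset.sum_congr rfl fun i _ => (dgJump_mul p q i).symm ▸ (by ring)
  have h4 : ∑ i ∈ Finset.range Nx,
        (dgAvg Nx X p i * dgJump Nx X q i + dgJump Nx X p i * dgAvg Nx X q i)
      = ∑ i ∈ Finset.range Nx, dgAvg Nx X p i * dgJump Nx X q i
        + ∑ i ∈ Finset.range Nx, dgJump Nx X p i * dgAvg Nx X q i :=
    Finset.sum_add_distrib
  linarith

end DGAux
end
noncomputable section
namespace DGAux

variable {Nx : ℕ} {X : ℕ → ℝ}

lemma dgPlus_half (p q : ℕ → Polynomial ℝ) (i : ℕ) :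
    dgPlus Nx X (fun j => (2⁻¹ : ℝ) • (p j + q j)) i
      = 2⁻¹ * (dgPlus Nx X p i + dgPlus Nx X q i) := by
  unfold dgPlus; split <;> simp <;> ring

lemma dgMinus_half (p q : ℕ → Polynomial ℝ) (i : ℕ) :
    dgMinus Nx X (fun j => (2⁻¹ : ℝ) • (p j + q j)) i
      = 2⁻¹ * (dgMinus Nx X p i + dgMinus Nx X q i) := by
  unfold dgMinus; split <;> simp <;> ring

lemma dgJump_half (p q : ℕ → Polynomial ℝ) (i : ℕ) :
    dgJump Nx X (fun j => (2⁻¹ : ℝ) • (p j + q j)) i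
      = 2⁻¹ * (dgJump Nx X p i + dgJump Nx X q i) := by
  unfold dgJump; rw [dgPlus_half, dgMinus_half]; ring

lemma dgAvg_half (p q : ℕ → Polynomial ℝ) (i : ℕ) :
    dgAvg Nx X (fun j => (2⁻¹ : ℝ) • (p j + q j)) i
      = 2⁻¹ * (dgAvg Nx X p i + dgAvg Nx X q i) := by
  unfold dgAvg; rw [dgPlus_half, dgMinus_half]; ring

lemma pint_half_left (j : ℕ) (p q r : Polynomial ℝ) :
    pint X j ((2⁻¹ : ℝ) • (p + q) * r)
      = 2⁻¹ * pint X j (p * r) + 2⁻¹ * pint X j (q * r) := by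
  rw [show ((2⁻¹ : ℝ) • (p + q) * r) = (2⁻¹ : ℝ) • (p * r) + (2⁻¹ : ℝ) • (q * r) by
    simp only [Polynomial.smul_eq_C_mul]; ring]
  rw [pint_add, pint_smul, pint_smul]

lemma pint_half_right (j : ℕ) (p q r : Polynomial ℝ) :
    pint X j (r * ((2⁻¹ : ℝ) • (p + q)))
      = 2⁻¹ * pint X j (r * p) + 2⁻¹ * pint X j (r * q) := by
  rw [show (r * ((2⁻¹ : ℝ) • (p + q))) = (2⁻¹ : ℝ) • (r * p) + (2⁻¹ : ℝ) • (r * q) by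
    simp only [Polynomial.smul_eq_C_mul]; ring]
  rw [pint_add, pint_smul, pint_smul]

lemma pint_half_deriv (j : ℕ) (p q r : Polynomial ℝ) :
    pint X j (r * ((2⁻¹ : ℝ) • (p + q)).derivative)
      = 2⁻¹ * pint X j (r * p.derivative) + 2⁻¹ * pint X j (r * q.derivative) := by
  rw [show ((2⁻¹ : ℝ) • (p + q)).derivative
      = (2⁻¹ : ℝ) • (p.derivative + q.derivative) by
    rw [Polynomial.derivative_smul, Polynomial.derivative_add]]
  exact pint_half_right j p.derivative q.derivative r

lemma dgG_zero (vth : ℝ) (Cf : ℕ → ℕ → Polynomial ℝ) (j : ℕ) :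
    dgG vth Cf 0 j = vth • Cf 1 j := by
  unfold dgG
  norm_num

lemma dgGhat_zero_eq (vth : ℝ) (hvth : vth ≠ 0) (NH : ℕ)
    (Cf : ℕ → ℕ → Polynomial ℝ) (i : ℕ) :
    dgGhat vth NH Nx X Cf 0 i = vth * dgC1hat vth NH Nx X Cf i := by
  unfold dgC1hat
  field_simp

end DGAux
end
noncomputable section
namespace DGAux

variable {Nx : ℕ} {X : ℕ → ℝ}

lemma half_deg {k : ℕ} {p q : Polynomial ℝ} (hp : p.natDegree ≤ k)
    (hq : q.natDegree ≤ k) : ((2⁻¹ : ℝ) • (p + q)).natDegree ≤ k :=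
  le_trans (Polynomial.natDegree_smul_le _ _)
    (le_trans (Polynomial.natDegree_add_le p q) (max_le hp hq))

lemma dgTotInt_eq (u : ℕ → Polynomial ℝ) :
    dgTotInt Nx X u = ∑ j ∈ Finset.range Nx, pint X j (u j) := rfl

lemma dgEnergy_eq (vth β : ℝ) (Cf : ℕ → ℕ → Polynomial ℝ)
    (Ef Φf : ℕ → Polynomial ℝ) :
    dgEnergy vth β Nx X Cf Ef Φf
      = (1 / 2) * (vth ^ 3 * Real.sqrt 2 * ∑ j ∈ Finset.range Nx, pint X j (Cf 2 j)
          + vth ^ 3 * ∑ j ∈ Finset.range Nx, pint X j (Cf 0 j)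
          + ∑ j ∈ Finset.range Nx, pint X j (Ef j * Ef j))
        + (β / 2) * ∑ i ∈ Finset.range Nx, dgJump Nx X Φf i * dgJump Nx X Φf i := by
  unfold dgEnergy
  have h1 : ∀ j ∈ Finset.range Nx,
      (cellInt X j fun x =>
        vth ^ 3 * (Real.sqrt 2 * (Cf 2 j).eval x + (Cf 0 j).eval x)
          + ((Ef j).eval x) ^ 2)
      = vth ^ 3 * Real.sqrt 2 * pint X j (Cf 2 j) + vth ^ 3 * pint X j (Cf 0 j)
          + pint X j (Ef j * Ef j) := by
    intro j _
    rw [cellInt_eq_pint ((vth ^ 3 * Real.sqrt 2) • Cf 2 j + (vth ^ 3 : ℝ) • Cf 0 j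
        + Ef j * Ef j) (fun x => by simp; ring),
      pint_add, pint_add, pint_smul, pint_smul]
  rw [Finset.sum_congr rfl h1]
  rw [Finset.sum_add_distrib, Finset.sum_add_distrib, ← Finset.mul_sum, ← Finset.mul_sum]
  have h2 : ∀ i ∈ Finset.range Nx, (dgJump Nx X Φf i) ^ 2
      = dgJump Nx X Φf i * dgJump Nx X Φf i := fun i _ => sq (dgJump Nx X Φf i)
  rw [Finset.sum_congr rfl h2]

end DGAux
end
noncomputable section
namespace DGAux

variable {Nx : ℕ} {X : ℕ → ℝ}

lemma sum_pair_jj (hNx : 1 ≤ Nx) (u v : ℕ → Polynomial ℝ) :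
    ∑ j ∈ Finset.range Nx,
      (dgJump Nx X u j * dgJump Nx X v j
        + dgJump Nx X u (j + 1) * dgJump Nx X v (j + 1))
    = 2 * ∑ i ∈ Finset.range Nx, dgJump Nx X u i * dgJump Nx X v i :=
  sum_pair hNx (fun i => dgJump Nx X u i * dgJump Nx X v i)
    (by show dgJump Nx X u Nx * dgJump Nx X v Nx = _
        rw [dgJump_periodic hNx, dgJump_periodic hNx])

end DGAux
end
/-- Conservation of discrete mass, momentum and total energy for the
first-order (forward Euler) fully discrete DG scheme. -/
theorem dg_euler_conservation
    (L vth ρ0 β Δt : ℝ) (k Nx NH : ℕ)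
    (hL : 0 < L) (hvth : 0 < vth) (hβ : 0 < β) (hΔt : 0 < Δt)
    (hNx : 1 ≤ Nx) (hNH : 3 ≤ NH)
    -- the partition `0 = x_{1/2} < … < x_{Nx+1/2} = L`
    (X : ℕ → ℝ) (hX0 : X 0 = 0) (hXL : X Nx = L)
    (hXmono : ∀ j < Nx, X j < X (j + 1))
    -- the numerical solution at each time step, cell by cell
    (C : ℕ → ℕ → ℕ → Polynomial ℝ) (E Φ : ℕ → ℕ → Polynomial ℝ)
    -- membership in `V_h^k`
    (hdegC : ∀ n m j, (C n m j).natDegree ≤ k)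
    (hdegE : ∀ m j, (E m j).natDegree ≤ k)
    (hdegΦ : ∀ m j, (Φ m j).natDegree ≤ k)
    -- truncation convention `C_{N_H} = 0` (and beyond)
    (hCtop : ∀ n, NH ≤ n → ∀ m j, C n m j = 0)
    -- (i) forward Euler step for every mode `n ≠ 2`
    (hStep : ∀ m : ℕ, ∀ n < NH, n ≠ 2 → ∀ j < Nx,
      ∀ φ : Polynomial ℝ, φ.natDegree ≤ k →
      (1 / Δt) * ((cellInt X j fun x => (C n (m + 1) j).eval x * φ.eval x)
          - cellInt X j fun x => (C n m j).eval x * φ.eval x)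
        + dgA vth NH Nx X (fun p i => C p m i) n j φ
        + dgB vth β NH Nx X (fun p i => C p m i) (E m) (Φ m) n j φ = 0)
    -- (ii) the DG Poisson solver at every time step
    (hPoisson : ∀ m : ℕ, dgPoisson vth ρ0 β k Nx X (C 0 m) (E m) (Φ m))
    -- (iii) update of `C_2` with the time-averaged field
    -- `E^{m+1/2} = (E^m + E^{m+1})/2`, `Φ^{m+1/2} = (Φ^m + Φ^{m+1})/2`
    (hStep2 : ∀ m : ℕ, ∀ j < Nx, ∀ φ : Polynomial ℝ, φ.natDegree ≤ k →
      (1 / Δt) * ((cellInt X j fun x => (C 2 (m + 1) j).eval x * φ.eval x)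
          - cellInt X j fun x => (C 2 m j).eval x * φ.eval x)
        + dgA vth NH Nx X (fun p i => C p m i) 2 j φ
        + dgB vth β NH Nx X (fun p i => C p m i)
            (fun i => (2⁻¹ : ℝ) • (E m i + E (m + 1) i))
            (fun i => (2⁻¹ : ℝ) • (Φ m i + Φ (m + 1) i)) 2 j φ = 0) :
    ∀ m : ℕ,
      dgTotInt Nx X (C 0 m) = dgTotInt Nx X (C 0 0)
      ∧ dgTotInt Nx X (C 1 m) = dgTotInt Nx X (C 1 0)
      ∧ dgEnergy vth β Nx X (fun p i => C p m i) (E m) (Φ m)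
          = dgEnergy vth β Nx X (fun p i => C p 0 i) (E 0) (Φ 0) := by

  have hNx1 : 1 ≤ Nx := hNx
  have hv1 : vth * (1 / vth) = 1 := mul_one_div_cancel (ne_of_gt hvth)
  have hΔ1 : Δt * (1 / Δt) = 1 := mul_one_div_cancel (ne_of_gt hΔt)
  have hvne : vth ≠ 0 := ne_of_gt hvth
  have hΔne : Δt ≠ 0 := ne_of_gt hΔt
  -- mass conservation per step
  have mass : ∀ m : ℕ, dgTotInt Nx X (C 0 (m + 1)) = dgTotInt Nx X (C 0 m) := by
    intro m
    have key : ∀ j ∈ Finset.range Nx,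
        (1 / Δt) * (DGAux.pint X j (C 0 (m + 1) j) - DGAux.pint X j (C 0 m j))
          + dgA vth NH Nx X (fun p i => C p m i) 0 j 1 = 0 := by
      intro j hj
      have h := hStep m 0 (by omega) (by omega) j (Finset.mem_range.mp hj) 1 (by simp)
      rw [DGAux.dgB_zero_eq,
        DGAux.cellInt_eq_pint (C 0 (m + 1) j) (fun x => by simp),
        DGAux.cellInt_eq_pint (C 0 m j) (fun x => by simp)] at h
      linarith
    have hsum := Finset.sum_eq_zero key
    rw [Finset.sum_add_distrib, DGAux.sum_dgA_one hNx1, ← Finset.mul_sum,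
      Finset.sum_sub_distrib] at hsum
    rw [DGAux.dgTotInt_eq, DGAux.dgTotInt_eq]
    have h2 : ∑ j ∈ Finset.range Nx, DGAux.pint X j (C 0 (m + 1) j)
        - ∑ j ∈ Finset.range Nx, DGAux.pint X j (C 0 m j) = 0 := by
      field_simp at hsum
      linarith
    linarith
  -- momentum conservation per step
  have mom : ∀ m : ℕ, dgTotInt Nx X (C 1 (m + 1)) = dgTotInt Nx X (C 1 m) := by
    intro m
    -- ∫ E = 0
    have hE0 : ∑ j ∈ Finset.range Nx, DGAux.pint X j (E m j) = 0 := by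
      have h := DGAux.poisson1_sum hNx1 (hPoisson m) (fun _ => (1 : Polynomial ℝ))
        (fun _ => by simp)
      simp only [Polynomial.derivative_one, mul_zero, mul_one, DGAux.pint_zero,
        DGAux.dgJump_one, Finset.sum_const_zero, add_zero] at h
      linarith
    -- Poisson second equation tested with E
    have hP2 := DGAux.poisson2_sum hNx1 (hPoisson m) (E m) (hdegE m)
    have hibp := DGAux.ibp_sum (X := X) hNx1 (E m) (E m)
    have hc1 : ∑ j ∈ Finset.range Nx, DGAux.pint X j ((E m j).derivative * E m j)
        = ∑ j ∈ Finset.range Nx, DGAux.pint X j (E m j * (E m j).derivative) :=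
      Finset.sum_congr rfl fun j _ => DGAux.pint_congr (mul_comm _ _)
    have hc2 : ∑ i ∈ Finset.range Nx,
          dgJump Nx X (E m) i * dgAvg Nx X (E m) i
        = ∑ i ∈ Finset.range Nx, dgAvg Nx X (E m) i * dgJump Nx X (E m) i :=
      Finset.sum_congr rfl fun i _ => mul_comm _ _
    -- β Σ [Φ][E] = vth Σ ∫ C0 E
    have hEC0 : β * ∑ i ∈ Finset.range Nx,
          dgJump Nx X (Φ m) i * dgJump Nx X (E m) i
        = vth * ∑ j ∈ Finset.range Nx, DGAux.pint X j (C 0 m j * E m j) := by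
      linear_combination hP2 + (1 / 2) * hibp - (1 / 2) * hc1 - (1 / 2) * hc2 - ρ0 * hE0
    have key : ∀ j ∈ Finset.range Nx,
        (1 / Δt) * (DGAux.pint X j (C 1 (m + 1) j) - DGAux.pint X j (C 1 m j))
          + dgA vth NH Nx X (fun p i => C p m i) 1 j 1
          + (-(1 / vth)) * DGAux.pint X j (E m j * C 0 m j)
          + (β / (2 * vth ^ 2)) *
              (dgJump Nx X (Φ m) j * dgJump Nx X (E m) j
                + dgJump Nx X (Φ m) (j + 1) * dgJump Nx X (E m) (j + 1)) = 0 := by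
      intro j hj
      have h := hStep m 1 (by omega) (by omega) j (Finset.mem_range.mp hj) 1 (by simp)
      rw [show dgB vth β NH Nx X (fun p i => C p m i) (E m) (Φ m) 1 j 1
          = -(1 / vth) * DGAux.pint X j (E m j * C 0 m j)
            + (β / (2 * vth ^ 2)) *
              (dgJump Nx X (Φ m) j * dgJump Nx X (E m) j
                + dgJump Nx X (Φ m) (j + 1) * dgJump Nx X (E m) (j + 1)) by
        unfold dgB dgR dgR1
        rw [if_pos rfl,
          DGAux.cellInt_eq_pint (E m j * C 0 m j) (fun x => by norm_num)]
        norm_num] at h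
      rw [DGAux.cellInt_eq_pint (C 1 (m + 1) j) (fun x => by simp),
        DGAux.cellInt_eq_pint (C 1 m j) (fun x => by simp)] at h
      linarith
    have hsum := Finset.sum_eq_zero key
    simp only [Finset.sum_add_distrib, ← Finset.mul_sum] at hsum
    rw [DGAux.sum_dgA_one hNx1, Finset.sum_sub_distrib] at hsum
    have hshift : ∑ x ∈ Finset.range Nx,
          dgJump Nx X (Φ m) (x + 1) * dgJump Nx X (E m) (x + 1)
        = ∑ x ∈ Finset.range Nx, dgJump Nx X (Φ m) x * dgJump Nx X (E m) x :=
      DGAux.sum_shift Nx (fun i => dgJump Nx X (Φ m) i * dgJump Nx X (E m) i)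
        (by show dgJump Nx X (Φ m) Nx * dgJump Nx X (E m) Nx = _
            rw [DGAux.dgJump_periodic hNx1, DGAux.dgJump_periodic hNx1])
    have hc3 : ∑ j ∈ Finset.range Nx, DGAux.pint X j (E m j * C 0 m j)
        = ∑ j ∈ Finset.range Nx, DGAux.pint X j (C 0 m j * E m j) :=
      Finset.sum_congr rfl fun j _ => DGAux.pint_congr (mul_comm _ _)
    rw [DGAux.dgTotInt_eq, DGAux.dgTotInt_eq]
    have h2 : (1 / Δt) * (∑ j ∈ Finset.range Nx, DGAux.pint X j (C 1 (m + 1) j)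
        - ∑ j ∈ Finset.range Nx, DGAux.pint X j (C 1 m j)) = 0 := by
      linear_combination hsum - (β / (2 * vth ^ 2)) * hshift + (1 / vth) * hc3
        - (1 / vth ^ 2) * hEC0
        - ((1 / vth) * ∑ j ∈ Finset.range Nx, DGAux.pint X j (C 0 m j * E m j)) * hv1
    rcases mul_eq_zero.mp h2 with h3 | h3
    · exact absurd h3 (by positivity)
    · linarith
  -- energy conservation per step
  have energy : ∀ m : ℕ,
      dgEnergy vth β Nx X (fun p i => C p (m + 1) i) (E (m + 1)) (Φ (m + 1))
        = dgEnergy vth β Nx X (fun p i => C p m i) (E m) (Φ m) := by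
    intro m
    have hA : ∀ b c : ℕ,
        ∑ j ∈ Finset.range Nx, DGAux.pint X j (Φ b j * (E c j).derivative)
          + ∑ i ∈ Finset.range Nx, dgAvg Nx X (Φ b) i * dgJump Nx X (E c) i
        = ∑ j ∈ Finset.range Nx, DGAux.pint X j (E b j * E c j) :=
      fun b c => DGAux.poisson1_sum hNx1 (hPoisson b) (E c) (hdegE c)
    have hB : ∀ b c : ℕ,
        -∑ j ∈ Finset.range Nx, DGAux.pint X j (E b j * (Φ c j).derivative)
          - ∑ i ∈ Finset.range Nx, dgAvg Nx X (E b) i * dgJump Nx X (Φ c) i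
          + β * ∑ i ∈ Finset.range Nx, dgJump Nx X (Φ b) i * dgJump Nx X (Φ c) i
        = vth * ∑ j ∈ Finset.range Nx, DGAux.pint X j (C 0 b j * Φ c j)
          - ρ0 * ∑ j ∈ Finset.range Nx, DGAux.pint X j (Φ c j) :=
      fun b c => DGAux.poisson2_sum hNx1 (hPoisson b) (Φ c) (hdegΦ c)
    have hI : ∀ b c : ℕ,
        ∑ j ∈ Finset.range Nx, DGAux.pint X j (Φ b j * (E c j).derivative)
          + ∑ j ∈ Finset.range Nx, DGAux.pint X j ((Φ b j).derivative * E c j)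
        = -∑ i ∈ Finset.range Nx, dgAvg Nx X (Φ b) i * dgJump Nx X (E c) i
          - ∑ i ∈ Finset.range Nx, dgJump Nx X (Φ b) i * dgAvg Nx X (E c) i :=
      fun b c => DGAux.ibp_sum (X := X) hNx1 (Φ b) (E c)
    have hIc : ∀ b c : ℕ,
        ∑ j ∈ Finset.range Nx, DGAux.pint X j ((Φ b j).derivative * E c j)
          = ∑ j ∈ Finset.range Nx, DGAux.pint X j (E c j * (Φ b j).derivative) :=
      fun b c => Finset.sum_congr rfl fun j _ => DGAux.pint_congr (mul_comm _ _)
    have hIc2 : ∀ b c : ℕ,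
        ∑ i ∈ Finset.range Nx, dgJump Nx X (Φ b) i * dgAvg Nx X (E c) i
          = ∑ i ∈ Finset.range Nx, dgAvg Nx X (E c) i * dgJump Nx X (Φ b) i :=
      fun b c => Finset.sum_congr rfl fun i _ => mul_comm _ _
    have hRsym :
        ∑ j ∈ Finset.range Nx, DGAux.pint X j (E m j * E (m + 1) j)
          = ∑ j ∈ Finset.range Nx, DGAux.pint X j (E (m + 1) j * E m j) :=
      Finset.sum_congr rfl fun j _ => DGAux.pint_congr (mul_comm _ _)
    have hKsym :
        ∑ i ∈ Finset.range Nx, dgJump Nx X (Φ m) i * dgJump Nx X (Φ (m + 1)) i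
          = ∑ i ∈ Finset.range Nx, dgJump Nx X (Φ (m + 1)) i * dgJump Nx X (Φ m) i :=
      Finset.sum_congr rfl fun i _ => mul_comm _ _
    have hA' : ∀ b : ℕ,
        ∑ j ∈ Finset.range Nx, DGAux.pint X j (Φ b j * (C 1 m j).derivative)
          + ∑ i ∈ Finset.range Nx, dgAvg Nx X (Φ b) i * dgJump Nx X (C 1 m) i
        = ∑ j ∈ Finset.range Nx, DGAux.pint X j (E b j * C 1 m j) :=
      fun b => DGAux.poisson1_sum hNx1 (hPoisson b) (C 1 m) (hdegC 1 m)
    have hI' : ∀ b : ℕ,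
        ∑ j ∈ Finset.range Nx, DGAux.pint X j (Φ b j * (C 1 m j).derivative)
          + ∑ j ∈ Finset.range Nx, DGAux.pint X j ((Φ b j).derivative * C 1 m j)
        = -∑ i ∈ Finset.range Nx, dgAvg Nx X (Φ b) i * dgJump Nx X (C 1 m) i
          - ∑ i ∈ Finset.range Nx, dgJump Nx X (Φ b) i * dgAvg Nx X (C 1 m) i :=
      fun b => DGAux.ibp_sum (X := X) hNx1 (Φ b) (C 1 m)
    have hI'c : ∀ b : ℕ,
        ∑ j ∈ Finset.range Nx, DGAux.pint X j ((Φ b j).derivative * C 1 m j)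
          = ∑ j ∈ Finset.range Nx, DGAux.pint X j (C 1 m j * (Φ b j).derivative) :=
      fun b => Finset.sum_congr rfl fun j _ => DGAux.pint_congr (mul_comm _ _)
    have hI'c2 : ∀ b : ℕ,
        ∑ i ∈ Finset.range Nx, dgJump Nx X (Φ b) i * dgAvg Nx X (C 1 m) i
          = ∑ i ∈ Finset.range Nx, dgAvg Nx X (C 1 m) i * dgJump Nx X (Φ b) i :=
      fun b => Finset.sum_congr rfl fun i _ => mul_comm _ _
    have hM0 : ∑ j ∈ Finset.range Nx, DGAux.pint X j (C 0 (m + 1) j)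
        = ∑ j ∈ Finset.range Nx, DGAux.pint X j (C 0 m j) := by
      have h := mass m
      rwa [DGAux.dgTotInt_eq, DGAux.dgTotInt_eq] at h
    have hs2 : Real.sqrt 2 * Real.sqrt 2 = 2 := Real.mul_self_sqrt (by norm_num)
    -- the C2 update with constant test
    have hE1 : Real.sqrt 2 * vth *
          (∑ j ∈ Finset.range Nx, DGAux.pint X j (C 2 (m + 1) j)
            - ∑ j ∈ Finset.range Nx, DGAux.pint X j (C 2 m j))
        = Δt * ((∑ j ∈ Finset.range Nx, DGAux.pint X j (E m j * C 1 m j)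
              + ∑ j ∈ Finset.range Nx, DGAux.pint X j (E (m + 1) j * C 1 m j))
            + (∑ i ∈ Finset.range Nx, dgAvg Nx X (C 1 m) i * dgJump Nx X (Φ m) i
              + ∑ i ∈ Finset.range Nx, dgAvg Nx X (C 1 m) i * dgJump Nx X (Φ (m + 1)) i
              - ∑ i ∈ Finset.range Nx,
                  dgC1hat vth NH Nx X (fun p i => C p m i) i * dgJump Nx X (Φ m) i
              - ∑ i ∈ Finset.range Nx,
                  dgC1hat vth NH Nx X (fun p i => C p m i) i * dgJump Nx X (Φ (m + 1)) i)) := by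
      have hs2' : Real.sqrt 2 ≠ 0 := by positivity
      have key : ∀ j ∈ Finset.range Nx,
          (1 / Δt) * (DGAux.pint X j (C 2 (m + 1) j) - DGAux.pint X j (C 2 m j))
            + dgA vth NH Nx X (fun p i => C p m i) 2 j 1
            - (Real.sqrt 2 / vth) * (2⁻¹ * DGAux.pint X j (E m j * C 1 m j)
                + 2⁻¹ * DGAux.pint X j (E (m + 1) j * C 1 m j))
            - (1 / (Real.sqrt 2 * vth)) *
                ((dgAvg Nx X (C 1 m) j - dgC1hat vth NH Nx X (fun p i => C p m i) j)
                    * (2⁻¹ * (dgJump Nx X (Φ m) j + dgJump Nx X (Φ (m + 1)) j))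
                  + (dgAvg Nx X (C 1 m) (j + 1)
                      - dgC1hat vth NH Nx X (fun p i => C p m i) (j + 1))
                    * (2⁻¹ * (dgJump Nx X (Φ m) (j + 1)
                        + dgJump Nx X (Φ (m + 1)) (j + 1)))) = 0 := by
        intro j hj
        have h := hStep2 m j (Finset.mem_range.mp hj) 1 (by simp)
        rw [show dgB vth β NH Nx X (fun p i => C p m i)
              (fun i => (2⁻¹ : ℝ) • (E m i + E (m + 1) i))
              (fun i => (2⁻¹ : ℝ) • (Φ m i + Φ (m + 1) i)) 2 j 1
            = -(Real.sqrt 2 / vth) * (2⁻¹ * DGAux.pint X j (E m j * C 1 m j)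
                + 2⁻¹ * DGAux.pint X j (E (m + 1) j * C 1 m j))
              - (1 / (Real.sqrt 2 * vth)) *
                ((dgAvg Nx X (C 1 m) j - dgC1hat vth NH Nx X (fun p i => C p m i) j)
                    * (2⁻¹ * (dgJump Nx X (Φ m) j + dgJump Nx X (Φ (m + 1)) j))
                  + (dgAvg Nx X (C 1 m) (j + 1)
                      - dgC1hat vth NH Nx X (fun p i => C p m i) (j + 1))
                    * (2⁻¹ * (dgJump Nx X (Φ m) (j + 1)
                        + dgJump Nx X (Φ (m + 1)) (j + 1)))) by
          unfold dgB dgR dgR2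
          rw [if_neg (by norm_num), if_pos rfl,
            DGAux.cellInt_eq_pint (((2⁻¹ : ℝ) • (E m j + E (m + 1) j)) * C 1 m j)
              (fun x => by simp),
            DGAux.pint_half_left, DGAux.dgJump_half, DGAux.dgJump_half]
          simp only [Polynomial.eval_one, Nat.cast_ofNat]
          ring] at h
        rw [DGAux.cellInt_eq_pint (C 2 (m + 1) j) (fun x => by simp),
          DGAux.cellInt_eq_pint (C 2 m j) (fun x => by simp)] at h
        linarith
      have hsum := Finset.sum_eq_zero key
      simp only [Finset.sum_add_distrib, Finset.sum_sub_distrib, ← Finset.mul_sum] at hsum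
      rw [DGAux.sum_dgA_one hNx1] at hsum
      have hsh : ∑ j ∈ Finset.range Nx,
            (dgAvg Nx X (C 1 m) (j + 1)
                - dgC1hat vth NH Nx X (fun p i => C p m i) (j + 1))
              * (2⁻¹ * (dgJump Nx X (Φ m) (j + 1) + dgJump Nx X (Φ (m + 1)) (j + 1)))
          = ∑ j ∈ Finset.range Nx,
            (dgAvg Nx X (C 1 m) j - dgC1hat vth NH Nx X (fun p i => C p m i) j)
              * (2⁻¹ * (dgJump Nx X (Φ m) j + dgJump Nx X (Φ (m + 1)) j)) :=
        DGAux.sum_shift Nx (fun i =>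
          (dgAvg Nx X (C 1 m) i - dgC1hat vth NH Nx X (fun p i => C p m i) i)
            * (2⁻¹ * (dgJump Nx X (Φ m) i + dgJump Nx X (Φ (m + 1)) i)))
          (by show (dgAvg Nx X (C 1 m) Nx - dgC1hat vth NH Nx X (fun p i => C p m i) Nx)
                * (2⁻¹ * (dgJump Nx X (Φ m) Nx + dgJump Nx X (Φ (m + 1)) Nx)) = _
              rw [DGAux.dgAvg_periodic hNx1, DGAux.dgC1hat_periodic hNx1,
                DGAux.dgJump_periodic hNx1, DGAux.dgJump_periodic hNx1])
      have hexp : ∑ j ∈ Finset.range Nx,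
            (dgAvg Nx X (C 1 m) j - dgC1hat vth NH Nx X (fun p i => C p m i) j)
              * (2⁻¹ * (dgJump Nx X (Φ m) j + dgJump Nx X (Φ (m + 1)) j))
          = 2⁻¹ * ∑ i ∈ Finset.range Nx, dgAvg Nx X (C 1 m) i * dgJump Nx X (Φ m) i
            + 2⁻¹ * ∑ i ∈ Finset.range Nx, dgAvg Nx X (C 1 m) i * dgJump Nx X (Φ (m + 1)) i
            - 2⁻¹ * ∑ i ∈ Finset.range Nx,
                dgC1hat vth NH Nx X (fun p i => C p m i) i * dgJump Nx X (Φ m) i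
            - 2⁻¹ * ∑ i ∈ Finset.range Nx,
                dgC1hat vth NH Nx X (fun p i => C p m i) i * dgJump Nx X (Φ (m + 1)) i := by
        have pt : ∀ j ∈ Finset.range Nx,
            (dgAvg Nx X (C 1 m) j - dgC1hat vth NH Nx X (fun p i => C p m i) j)
              * (2⁻¹ * (dgJump Nx X (Φ m) j + dgJump Nx X (Φ (m + 1)) j))
            = 2⁻¹ * (dgAvg Nx X (C 1 m) j * dgJump Nx X (Φ m) j)
              + 2⁻¹ * (dgAvg Nx X (C 1 m) j * dgJump Nx X (Φ (m + 1)) j)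
              - 2⁻¹ * (dgC1hat vth NH Nx X (fun p i => C p m i) j * dgJump Nx X (Φ m) j)
              - 2⁻¹ * (dgC1hat vth NH Nx X (fun p i => C p m i) j
                  * dgJump Nx X (Φ (m + 1)) j) := fun j _ => by ring
        rw [Finset.sum_congr rfl pt, Finset.sum_sub_distrib, Finset.sum_sub_distrib,
          Finset.sum_add_distrib, ← Finset.mul_sum, ← Finset.mul_sum, ← Finset.mul_sum,
          ← Finset.mul_sum]
      rw [hsh, hexp] at hsum
      have hmix : (Real.sqrt 2 * vth) * (1 / (Real.sqrt 2 * vth)) = 1 :=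
        mul_one_div_cancel (by positivity)
      have hmix2 : Real.sqrt 2 * Real.sqrt 2 * (vth * (1 / vth)) = 2 := by
        rw [hv1, mul_one, hs2]
      linear_combination (Real.sqrt 2 * vth * Δt) * hsum
        - (Real.sqrt 2 * vth * (∑ j ∈ Finset.range Nx, DGAux.pint X j (C 2 (m + 1) j)
            - ∑ j ∈ Finset.range Nx, DGAux.pint X j (C 2 m j))) * hΔ1
        + (Δt * (∑ i ∈ Finset.range Nx, dgAvg Nx X (C 1 m) i * dgJump Nx X (Φ m) i
            + ∑ i ∈ Finset.range Nx, dgAvg Nx X (C 1 m) i * dgJump Nx X (Φ (m + 1)) i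
            - ∑ i ∈ Finset.range Nx,
                dgC1hat vth NH Nx X (fun p i => C p m i) i * dgJump Nx X (Φ m) i
            - ∑ i ∈ Finset.range Nx,
                dgC1hat vth NH Nx X (fun p i => C p m i) i * dgJump Nx X (Φ (m + 1)) i)) * hmix
        + (Δt * (∑ j ∈ Finset.range Nx, DGAux.pint X j (E m j * C 1 m j)
            + ∑ j ∈ Finset.range Nx, DGAux.pint X j (E (m + 1) j * C 1 m j)) / 2) * hmix2
    -- the C0 update tested with the time-averaged potential
    have hE2 : (∑ j ∈ Finset.range Nx, DGAux.pint X j (C 0 (m + 1) j * Φ m j)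
            + ∑ j ∈ Finset.range Nx, DGAux.pint X j (C 0 (m + 1) j * Φ (m + 1) j))
          - (∑ j ∈ Finset.range Nx, DGAux.pint X j (C 0 m j * Φ m j)
            + ∑ j ∈ Finset.range Nx, DGAux.pint X j (C 0 m j * Φ (m + 1) j))
        = Δt * vth * ((∑ j ∈ Finset.range Nx, DGAux.pint X j (C 1 m j * (Φ m j).derivative)
              + ∑ j ∈ Finset.range Nx, DGAux.pint X j (C 1 m j * (Φ (m + 1) j).derivative))
            + (∑ i ∈ Finset.range Nx,
                dgC1hat vth NH Nx X (fun p i => C p m i) i * dgJump Nx X (Φ m) i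
              + ∑ i ∈ Finset.range Nx,
                dgC1hat vth NH Nx X (fun p i => C p m i) i * dgJump Nx X (Φ (m + 1)) i)) := by
      have key : ∀ j ∈ Finset.range Nx,
          (1 / Δt) * ((2⁻¹ * DGAux.pint X j (C 0 (m + 1) j * Φ m j)
              + 2⁻¹ * DGAux.pint X j (C 0 (m + 1) j * Φ (m + 1) j))
            - (2⁻¹ * DGAux.pint X j (C 0 m j * Φ m j)
              + 2⁻¹ * DGAux.pint X j (C 0 m j * Φ (m + 1) j)))
            + dgA vth NH Nx X (fun p i => C p m i) 0 j
                ((2⁻¹ : ℝ) • (Φ m j + Φ (m + 1) j)) = 0 := by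
        intro j hj
        have h := hStep m 0 (by omega) (by omega) j (Finset.mem_range.mp hj)
          ((2⁻¹ : ℝ) • (Φ m j + Φ (m + 1) j))
          (DGAux.half_deg (hdegΦ m j) (hdegΦ (m + 1) j))
        rw [DGAux.dgB_zero_eq,
          DGAux.cellInt_eq_pint (C 0 (m + 1) j * ((2⁻¹ : ℝ) • (Φ m j + Φ (m + 1) j)))
            (fun x => by simp),
          DGAux.cellInt_eq_pint (C 0 m j * ((2⁻¹ : ℝ) • (Φ m j + Φ (m + 1) j)))
            (fun x => by simp),
          DGAux.pint_half_right, DGAux.pint_half_right] at h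
        linarith
      have hsum := Finset.sum_eq_zero key
      simp only [Finset.sum_add_distrib, Finset.sum_sub_distrib, ← Finset.mul_sum] at hsum
      have hsumA : ∑ j ∈ Finset.range Nx, dgA vth NH Nx X (fun p i => C p m i) 0 j
            ((2⁻¹ : ℝ) • (Φ m j + Φ (m + 1) j))
          = -∑ j ∈ Finset.range Nx, DGAux.pint X j
              (dgG vth (fun p i => C p m i) 0 j
                * (((2⁻¹ : ℝ) • (Φ m j + Φ (m + 1) j)) : Polynomial ℝ).derivative)
            - ∑ i ∈ Finset.range Nx, dgGhat vth NH Nx X (fun p i => C p m i) 0 i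
                * dgJump Nx X (fun j => (2⁻¹ : ℝ) • (Φ m j + Φ (m + 1) j)) i :=
        DGAux.sum_dgA hNx1 vth NH (fun p i => C p m i) 0
          (fun j => (2⁻¹ : ℝ) • (Φ m j + Φ (m + 1) j))
      have hBg : ∑ j ∈ Finset.range Nx, DGAux.pint X j
            (dgG vth (fun p i => C p m i) 0 j
              * (((2⁻¹ : ℝ) • (Φ m j + Φ (m + 1) j)) : Polynomial ℝ).derivative)
          = 2⁻¹ * vth * ∑ j ∈ Finset.range Nx,
                DGAux.pint X j (C 1 m j * (Φ m j).derivative)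
            + 2⁻¹ * vth * ∑ j ∈ Finset.range Nx,
                DGAux.pint X j (C 1 m j * (Φ (m + 1) j).derivative) := by
        have pt : ∀ j ∈ Finset.range Nx, DGAux.pint X j
              (dgG vth (fun p i => C p m i) 0 j
                * (((2⁻¹ : ℝ) • (Φ m j + Φ (m + 1) j)) : Polynomial ℝ).derivative)
            = 2⁻¹ * vth * DGAux.pint X j (C 1 m j * (Φ m j).derivative)
              + 2⁻¹ * vth * DGAux.pint X j (C 1 m j * (Φ (m + 1) j).derivative) := by
          intro j _
          rw [DGAux.pint_congr (q := (vth • C 1 m j)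
                * (((2⁻¹ : ℝ) • (Φ m j + Φ (m + 1) j)) : Polynomial ℝ).derivative)
              (by rw [DGAux.dgG_zero]),
            smul_mul_assoc, DGAux.pint_smul, DGAux.pint_half_deriv]
          ring
        rw [Finset.sum_congr rfl pt, Finset.sum_add_distrib, ← Finset.mul_sum,
          ← Finset.mul_sum]
      have hZg : ∑ i ∈ Finset.range Nx, dgGhat vth NH Nx X (fun p i => C p m i) 0 i
            * dgJump Nx X (fun j => (2⁻¹ : ℝ) • (Φ m j + Φ (m + 1) j)) i
          = 2⁻¹ * vth * ∑ i ∈ Finset.range Nx,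
                dgC1hat vth NH Nx X (fun p i => C p m i) i * dgJump Nx X (Φ m) i
            + 2⁻¹ * vth * ∑ i ∈ Finset.range Nx,
                dgC1hat vth NH Nx X (fun p i => C p m i) i * dgJump Nx X (Φ (m + 1)) i := by
        have pt : ∀ i ∈ Finset.range Nx, dgGhat vth NH Nx X (fun p i => C p m i) 0 i
              * dgJump Nx X (fun j => (2⁻¹ : ℝ) • (Φ m j + Φ (m + 1) j)) i
            = 2⁻¹ * vth * (dgC1hat vth NH Nx X (fun p i => C p m i) i
                  * dgJump Nx X (Φ m) i)
              + 2⁻¹ * vth * (dgC1hat vth NH Nx X (fun p i => C p m i) i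
                  * dgJump Nx X (Φ (m + 1)) i) := by
          intro i _
          rw [DGAux.dgGhat_zero_eq vth hvne, DGAux.dgJump_half]
          ring
        rw [Finset.sum_congr rfl pt, Finset.sum_add_distrib, ← Finset.mul_sum,
          ← Finset.mul_sum]
      rw [hsumA, hBg, hZg] at hsum
      linear_combination (2 * Δt) * hsum
        - (∑ j ∈ Finset.range Nx, DGAux.pint X j (C 0 (m + 1) j * Φ m j)
          + ∑ j ∈ Finset.range Nx, DGAux.pint X j (C 0 (m + 1) j * Φ (m + 1) j)
          - ∑ j ∈ Finset.range Nx, DGAux.pint X j (C 0 m j * Φ m j)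
          - ∑ j ∈ Finset.range Nx, DGAux.pint X j (C 0 m j * Φ (m + 1) j)) * hΔ1
    rw [DGAux.dgEnergy_eq, DGAux.dgEnergy_eq]
    linear_combination (vth ^ 3 / 2) * hM0
      + (vth ^ 2 / 2) * hE1
      + (vth / 2) * hE2
      + (Δt * vth ^ 2 / 2) * (- hA' m + hI' m - hI'c m - hI'c2 m)
      + (Δt * vth ^ 2 / 2) * (- hA' (m + 1) + hI' (m + 1) - hI'c (m + 1) - hI'c2 (m + 1))
      + (1 / 2) * (- hA (m + 1) (m + 1) + hI (m + 1) (m + 1) - hIc (m + 1) (m + 1)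
          - hIc2 (m + 1) (m + 1) + hB (m + 1) (m + 1))
      - (1 / 2) * (- hA m m + hI m m - hIc m m - hIc2 m m + hB m m)
      + (1 / 2) * (- hA m (m + 1) + hI m (m + 1) - hIc m (m + 1) - hIc2 m (m + 1)
          + hB (m + 1) m)
      - (1 / 2) * (- hA (m + 1) m + hI (m + 1) m - hIc (m + 1) m - hIc2 (m + 1) m
          + hB m (m + 1))
      - (1 / 2) * hRsym + (β / 2) * hKsym
  intro m
  induction m with
  | zero => exact ⟨rfl, rfl, rfl⟩
  | succ n ih =>
      exact ⟨(mass n).trans ih.1, (mom n).trans ih.2.1, (energy n).trans ih.2.2⟩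
end

section
/- Conservation for the second-order (two-stage Runge–Kutta) fully discrete DG scheme: let (C_n^m), (E^m), (Φ^m) in V_h^k satisfy, for every m ≥ 0, the two-stage scheme: Stage 1 (half step): for n ≠ 2, (2/Δt)∫_{I_j}(C_n^{(1)} − C_n^m)φ dx + a_n^j(g_n^m, φ) + b_n^j(C^m, E^m, Φ^m, φ) = 0 for all cells and test polynomials; (E^{(1)}, Φ^{(1)}) solves the DG Poisson scheme with source C_0^{(1)}; and with E^{m+1/4} = (E^m + E^{(1)})/2, Φ^{m+1/4} = (Φ^m + Φ^{(1)})/2, (2/Δt)∫_{I_j}(C_2^{(1)} − C_2^m)φ dx + a_2^j(g_2^m, φ) + b_2^j(C^m, E^{m+1/4}, Φ^{m+1/4}, φ) = 0. Stage 2 (full step): for n ≠ 2, (1/Δt)∫_{I_j}(C_n^{m+1} − C_n^m)φ dx + a_n^j(g_n^{(1)}, φ) + b_n^j(C^{(1)}, E^{(1)}, Φ^{(1)}, φ) = 0; (E^{m+1}, Φ^{m+1}) solves the DG Poisson scheme with source C_0^{m+1} (and (E^m, Φ^m) with source C_0^m); and with E^{m+1/2} = (E^m + E^{m+1})/2, Φ^{m+1/2}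 = (Φ^m + Φ^{m+1})/2, (1/Δt)∫_{I_j}(C_2^{m+1} − C_2^m)φ dx + a_2^j(g_2^{(1)}, φ) + b_2^j(C^{(1)}, E^{m+1/2}, Φ^{m+1/2}, φ) = 0. Then for every m ≥ 0: ∫_0^L C_0^m dx = ∫_0^L C_0^0 dx, ∫_0^L C_1^m dx = ∫_0^L C_1^0 dx, and ℰ_h^m := (1/2)∫_0^L [ v_th³ (√2 C_2^m + C_0^m) + (E^m)² ] dx + (β/2) Σ_j ([Φ^m]_{j−1/2})² satisfies ℰ_h^m = ℰ_h^0. -/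
open MeasureTheory Finset

noncomputable section DGHelpers

namespace DGaux

variable (X : ℕ → ℝ)

/-- cell integral of a polynomial. -/
def pI (j : ℕ) (p : Polynomial ℝ) : ℝ := cellInt X j fun x => p.eval x

lemma pI_add (j : ℕ) (p q : Polynomial ℝ) :
    pI X j (p + q) = pI X j p + pI X j q := by
  unfold pI cellInt
  simp only [Polynomial.eval_add]
  exact intervalIntegral.integral_add ((p.continuous_aeval).intervalIntegrable _ _)
    ((q.continuous_aeval).intervalIntegrable _ _)

lemma pI_smul (j : ℕ) (c : ℝ) (p : Polynomial ℝ) :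
    pI X j (c • p) = c * pI X j p := by
  unfold pI cellInt
  simp only [Polynomial.eval_smul, smul_eq_mul]
  exact intervalIntegral.integral_const_mul c _

lemma pI_sub (j : ℕ) (p q : Polynomial ℝ) :
    pI X j (p - q) = pI X j p - pI X j q := by
  have h := pI_add X j q (p - q)
  simp only [add_sub_cancel] at h
  linarith

lemma pI_deriv (j : ℕ) (p : Polynomial ℝ) :
    pI X j p.derivative = p.eval (X (j+1)) - p.eval (X j) := by
  unfold pI cellInt
  exact intervalIntegral.integral_eq_sub_of_hasDerivAt (fun x _ => p.hasDerivAt x)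
    ((p.derivative.continuous_aeval).intervalIntegrable _ _)

/-- FTC for a product of polynomials. -/
lemma pI_mul_deriv (j : ℕ) (p q : Polynomial ℝ) :
    pI X j (p * q.derivative) + pI X j (q * p.derivative)
      = (p * q).eval (X (j+1)) - (p * q).eval (X j) := by
  rw [← pI_add, ← pI_deriv X j (p * q)]
  congr 1
  rw [Polynomial.derivative_mul]; ring

lemma pI_sq_deriv (j : ℕ) (p : Polynomial ℝ) :
    pI X j (p * p.derivative) = ((p * p).eval (X (j+1)) - (p * p).eval (X j)) / 2 := by
  have := pI_mul_deriv X j p p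
  linarith

lemma sum_shift (Nx : ℕ) (F : ℕ → ℝ) (h : F Nx = F 0) :
    ∑ j ∈ range Nx, F (j+1) = ∑ j ∈ range Nx, F j := by
  have h1 := Finset.sum_range_succ F Nx
  have h2 := Finset.sum_range_succ' F Nx
  rw [h1] at h2; linarith

lemma telescope (Nx : ℕ) (F : ℕ → ℝ) (h : F Nx = F 0) :
    ∑ j ∈ range Nx, (F (j+1) - F j) = 0 := by
  rw [Finset.sum_sub_distrib, sum_shift Nx F h, sub_self]

variable {Nx : ℕ}

lemma dgMinus_per (hNx : 1 ≤ Nx) (u : ℕ → Polynomial ℝ) :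
    dgMinus Nx X u Nx = dgMinus Nx X u 0 := by
  unfold dgMinus
  rw [if_neg (by omega), if_pos rfl]

lemma dgPlus_per (hNx : 1 ≤ Nx) (u : ℕ → Polynomial ℝ) :
    dgPlus Nx X u Nx = dgPlus Nx X u 0 := by
  unfold dgPlus
  rw [if_pos rfl, if_neg (by omega)]

lemma dgJump_per (hNx : 1 ≤ Nx) (u : ℕ → Polynomial ℝ) :
    dgJump Nx X u Nx = dgJump Nx X u 0 := by
  unfold dgJump; rw [dgMinus_per X hNx, dgPlus_per X hNx]

lemma dgAvg_per (hNx : 1 ≤ Nx) (u : ℕ → Polynomial ℝ) :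
    dgAvg Nx X u Nx = dgAvg Nx X u 0 := by
  unfold dgAvg; rw [dgMinus_per X hNx, dgPlus_per X hNx]

lemma dgGhat_per (hNx : 1 ≤ Nx) (vth : ℝ) (NH : ℕ) (Cf : ℕ → ℕ → Polynomial ℝ) (n : ℕ) :
    dgGhat vth NH Nx X Cf n Nx = dgGhat vth NH Nx X Cf n 0 := by
  unfold dgGhat
  rw [dgMinus_per X hNx, dgPlus_per X hNx, dgMinus_per X hNx, dgPlus_per X hNx]

lemma dgC1hat_per (hNx : 1 ≤ Nx) (vth : ℝ) (NH : ℕ) (Cf : ℕ → ℕ → Polynomial ℝ) :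
    dgC1hat vth NH Nx X Cf Nx = dgC1hat vth NH Nx X Cf 0 := by
  unfold dgC1hat; rw [dgGhat_per X hNx]

lemma evalP {j : ℕ} (hj : j < Nx) (u : ℕ → Polynomial ℝ) :
    (u j).eval (X j) = dgPlus Nx X u j := by
  unfold dgPlus; rw [if_neg hj.ne]

lemma evalM (j : ℕ) (u : ℕ → Polynomial ℝ) :
    (u j).eval (X (j+1)) = dgMinus Nx X u (j+1) := by
  unfold dgMinus; rw [if_neg (Nat.succ_ne_zero j)]; simp

end DGaux

end DGHelpers

noncomputable section DGHelpers2

namespace DGaux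

variable (X : ℕ → ℝ) {Nx : ℕ}

lemma dgB_zero (vth β : ℝ) (NH : ℕ) (Cf : ℕ → ℕ → Polynomial ℝ)
    (Ef Φf : ℕ → Polynomial ℝ) (j : ℕ) (φ : Polynomial ℝ) :
    dgB vth β NH Nx X Cf Ef Φf 0 j φ = 0 := by
  simp [dgB, dgR]

lemma dgA_one (vth : ℝ) (NH : ℕ) (Cf : ℕ → ℕ → Polynomial ℝ) (n j : ℕ) :
    dgA vth NH Nx X Cf n j 1
      = dgGhat vth NH Nx X Cf n (j+1) - dgGhat vth NH Nx X Cf n j := by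
  simp [dgA, cellInt]

lemma dgG_zero (vth : ℝ) (Cf : ℕ → ℕ → Polynomial ℝ) (j : ℕ) :
    dgG vth Cf 0 j = vth • Cf 1 j := by
  simp [dgG]

lemma ghat0 (vth : ℝ) (hvth : vth ≠ 0) (NH : ℕ) (Cf : ℕ → ℕ → Polynomial ℝ) (i : ℕ) :
    dgGhat vth NH Nx X Cf 0 i = vth * dgC1hat vth NH Nx X Cf i := by
  unfold dgC1hat; field_simp

lemma cellInt_mul (j : ℕ) (p q : Polynomial ℝ) :
    (cellInt X j fun x => p.eval x * q.eval x) = pI X j (p * q) := by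
  simp [pI, cellInt, Polynomial.eval_mul]

lemma cellInt_mul3 (j : ℕ) (p q r : Polynomial ℝ) :
    (cellInt X j fun x => p.eval x * q.eval x * r.eval x) = pI X j (p * q * r) := by
  simp [pI, cellInt, Polynomial.eval_mul]

lemma cellInt_one (j : ℕ) (p : Polynomial ℝ) :
    (cellInt X j fun x => p.eval x * (1 : Polynomial ℝ).eval x) = pI X j p := by
  simp [pI, cellInt]

lemma cellInt_energy (vth : ℝ) (j : ℕ) (c2 c0 e : Polynomial ℝ) :
    (cellInt X j fun x =>
        vth ^ 3 * (Real.sqrt 2 * c2.eval x + c0.eval x) + (e.eval x) ^ 2)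
      = vth ^ 3 * Real.sqrt 2 * pI X j c2 + vth ^ 3 * pI X j c0 + pI X j (e * e) := by
  have h : (fun x => vth ^ 3 * (Real.sqrt 2 * c2.eval x + c0.eval x) + (e.eval x) ^ 2)
      = fun x => ((vth ^ 3 * Real.sqrt 2) • c2 + (vth ^ 3) • c0 + e * e).eval x := by
    funext x
    simp [Polynomial.eval_smul, smul_eq_mul]
    ring
  rw [show (cellInt X j fun x =>
        vth ^ 3 * (Real.sqrt 2 * c2.eval x + c0.eval x) + (e.eval x) ^ 2)
      = pI X j ((vth ^ 3 * Real.sqrt 2) • c2 + (vth ^ 3) • c0 + e * e) from by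
    unfold pI; rw [h]]
  rw [pI_add, pI_add, pI_smul, pI_smul]

lemma cellInt_poisson_rhs (vth ρ0 : ℝ) (j : ℕ) (c0 ψ : Polynomial ℝ) :
    (cellInt X j fun x => (vth * c0.eval x - ρ0) * ψ.eval x)
      = vth * pI X j (c0 * ψ) - ρ0 * pI X j ψ := by
  have h : (fun x => (vth * c0.eval x - ρ0) * ψ.eval x)
      = fun x => (vth • (c0 * ψ) - ρ0 • ψ).eval x := by
    funext x
    simp [Polynomial.eval_smul, smul_eq_mul]
    ring
  rw [show (cellInt X j fun x => (vth * c0.eval x - ρ0) * ψ.eval x)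
      = pI X j (vth • (c0 * ψ) - ρ0 • ψ) from by unfold pI; rw [h]]
  rw [pI_sub, pI_smul, pI_smul]

end DGaux

end DGHelpers2

noncomputable section DGHelpers3

namespace DGaux

variable (X : ℕ → ℝ) {Nx : ℕ}

lemma telescope' (Nx : ℕ) (F : ℕ → ℝ) (h : F Nx = F 0) :
    ∑ j ∈ range Nx, (F j - F (j+1)) = 0 := by
  rw [Finset.sum_sub_distrib, sum_shift Nx F h, sub_self]

lemma dgTotInt_eq (Nx : ℕ) (u : ℕ → Polynomial ℝ) :
    dgTotInt Nx X u = ∑ j ∈ range Nx, pI X j (u j) := rfl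

lemma massStep (vth β Δt : ℝ) (hΔt : Δt ≠ 0) {k Nx NH : ℕ} (hNx : 1 ≤ Nx)
    (Cf : ℕ → ℕ → Polynomial ℝ) (Ef Φf : ℕ → Polynomial ℝ)
    (Cold Cnew : ℕ → Polynomial ℝ)
    (h : ∀ j < Nx,
      (1 / Δt) * ((cellInt X j fun x => (Cnew j).eval x * (1 : Polynomial ℝ).eval x)
          - cellInt X j fun x => (Cold j).eval x * (1 : Polynomial ℝ).eval x)
        + dgA vth NH Nx X Cf 0 j 1 + dgB vth β NH Nx X Cf Ef Φf 0 j 1 = 0) :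
    dgTotInt Nx X Cnew = dgTotInt Nx X Cold := by
  have key : ∀ j ∈ range Nx, (pI X j (Cnew j) : ℝ)
      = pI X j (Cold j)
        + Δt * (dgGhat vth NH Nx X Cf 0 j - dgGhat vth NH Nx X Cf 0 (j+1)) := by
    intro j hj
    have h1 := h j (mem_range.mp hj)
    rw [dgB_zero, dgA_one, cellInt_one, cellInt_one] at h1
    field_simp at h1
    ring_nf at h1 ⊢
    linarith
  rw [dgTotInt_eq, dgTotInt_eq, Finset.sum_congr rfl key, Finset.sum_add_distrib,
    ← Finset.mul_sum, telescope' Nx _ (dgGhat_per X hNx vth NH Cf 0), mul_zero, add_zero]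

end DGaux

end DGHelpers3

noncomputable section DGHelpers4

namespace DGaux

/-- minus-side interface functional appearing in the E-energy computation -/
def Wm (Nx : ℕ) (X : ℕ → ℝ) (β : ℝ) (Ef Φf : ℕ → Polynomial ℝ) (i : ℕ) : ℝ :=
  -(dgMinus Nx X Ef i)^2/2
    + (dgAvg Nx X Ef i - β * dgJump Nx X Φf i) * dgMinus Nx X Ef i

/-- plus-side interface functional -/
def Wp (Nx : ℕ) (X : ℕ → ℝ) (β : ℝ) (Ef Φf : ℕ → Polynomial ℝ) (i : ℕ) : ℝ :=
  -(dgPlus Nx X Ef i)^2/2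
    + (dgAvg Nx X Ef i - β * dgJump Nx X Φf i) * dgPlus Nx X Ef i

variable (X : ℕ → ℝ) {Nx : ℕ}

lemma Wm_per (hNx : 1 ≤ Nx) (β : ℝ) (Ef Φf : ℕ → Polynomial ℝ) :
    Wm Nx X β Ef Φf Nx = Wm Nx X β Ef Φf 0 := by
  unfold Wm
  rw [dgMinus_per X hNx, dgAvg_per X hNx, dgJump_per X hNx]

lemma cellInt_mul_one (j : ℕ) (p q : Polynomial ℝ) :
    (cellInt X j fun x => p.eval x * q.eval x * (1 : Polynomial ℝ).eval x)
      = pI X j (p * q) := by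
  simp [pI, cellInt, Polynomial.eval_mul]

/-- the key momentum identity derived from the Poisson solver:
`v_th ∫ E C_0 = β Σ [Φ][E]`. -/
lemma poissonMom (vth ρ0 β : ℝ) {k : ℕ} (hNx : 1 ≤ Nx)
    (C0f Ef Φf : ℕ → Polynomial ℝ)
    (hdegE : ∀ j, (Ef j).natDegree ≤ k)
    (hP : dgPoisson vth ρ0 β k Nx X C0f Ef Φf) :
    vth * ∑ j ∈ range Nx, pI X j (C0f j * Ef j)
      = β * ∑ i ∈ range Nx, dgJump Nx X Φf i * dgJump Nx X Ef i := by
  have ha : ∑ j ∈ range Nx, pI X j (Ef j) = 0 := by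
    have key : ∀ j ∈ range Nx, pI X j (Ef j)
        = dgAvg Nx X Φf j - dgAvg Nx X Φf (j+1) := by
      intro j hj
      have h1 := (hP j (mem_range.mp hj) 1 (by simp)).1
      simp only [Polynomial.derivative_one, Polynomial.eval_zero, mul_zero,
        Polynomial.eval_one, mul_one, cellInt, intervalIntegral.integral_zero] at h1
      rw [pI, cellInt]; linarith
    rw [Finset.sum_congr rfl key]
    exact telescope' Nx _ (dgAvg_per X hNx Φf)
  have hb : ∀ j ∈ range Nx,
      vth * pI X j (C0f j * Ef j) - ρ0 * pI X j (Ef j)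
        = Wm Nx X β Ef Φf (j+1) - Wp Nx X β Ef Φf j := by
    intro j hj
    have hjlt := mem_range.mp hj
    have h1 := (hP j hjlt (Ef j) (hdegE j)).2
    rw [cellInt_poisson_rhs, cellInt_mul, pI_sq_deriv] at h1
    rw [Polynomial.eval_mul, Polynomial.eval_mul,
      evalM X (Nx := Nx) j Ef, evalP X (Nx := Nx) hjlt Ef] at h1
    unfold Wm Wp
    linear_combination -h1
  have hsum := Finset.sum_congr rfl hb
  rw [Finset.sum_sub_distrib, Finset.sum_sub_distrib, ← Finset.mul_sum,
    ← Finset.mul_sum, ha, mul_zero, sub_zero,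
    sum_shift Nx _ (Wm_per X hNx β Ef Φf), ← Finset.sum_sub_distrib] at hsum
  rw [hsum, Finset.mul_sum]
  refine Finset.sum_congr rfl fun i _ => ?_
  unfold Wm Wp dgAvg dgJump
  ring

lemma momStep (vth ρ0 β Δt : ℝ) (hvth : vth ≠ 0) (hΔt : Δt ≠ 0)
    {k Nx NH : ℕ} (hNx : 1 ≤ Nx)
    (Cf : ℕ → ℕ → Polynomial ℝ) (Ef Φf : ℕ → Polynomial ℝ)
    (Cold Cnew : ℕ → Polynomial ℝ)
    (hdegE : ∀ j, (Ef j).natDegree ≤ k)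
    (h : ∀ j < Nx,
      (1 / Δt) * ((cellInt X j fun x => (Cnew j).eval x * (1 : Polynomial ℝ).eval x)
          - cellInt X j fun x => (Cold j).eval x * (1 : Polynomial ℝ).eval x)
        + dgA vth NH Nx X Cf 1 j 1 + dgB vth β NH Nx X Cf Ef Φf 1 j 1 = 0)
    (hP : dgPoisson vth ρ0 β k Nx X (Cf 0) Ef Φf) :
    dgTotInt Nx X Cnew = dgTotInt Nx X Cold := by
  set T : ℕ → ℝ := fun i => dgJump Nx X Φf i * dgJump Nx X Ef i with hTdef
  have hTper : T Nx = T 0 := by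
    simp only [hTdef, dgJump_per X hNx]
  have key : ∀ j ∈ range Nx, pI X j (Cnew j)
      = pI X j (Cold j)
        + (Δt * (dgGhat vth NH Nx X Cf 1 j - dgGhat vth NH Nx X Cf 1 (j+1))
          + ((Δt / vth) * pI X j (Cf 0 j * Ef j)
            - (Δt * β / (2 * vth^2)) * (T j + T (j+1)))) := by
    intro j hj
    have h1 := h j (mem_range.mp hj)
    rw [dgA_one, cellInt_one, cellInt_one] at h1
    unfold dgB dgR dgR1 at h1
    rw [if_pos rfl] at h1
    rw [cellInt_mul_one, mul_comm (Ef j) (Cf 0 j)] at h1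
    simp only [Nat.cast_one, Real.sqrt_one, Polynomial.eval_one, mul_one] at h1
    simp only [hTdef]
    have h2 : (1:ℝ) / Δt * (pI X j (Cnew j) - pI X j (Cold j))
        = dgGhat vth NH Nx X Cf 1 j - dgGhat vth NH Nx X Cf 1 (j+1)
          + (1 / vth) * pI X j (Cf 0 j * Ef j)
          - (β / (2 * vth^2)) * (dgJump Nx X Φf j * dgJump Nx X Ef j
              + dgJump Nx X Φf (j+1) * dgJump Nx X Ef (j+1)) := by
      linear_combination h1
    have h3 := congrArg (fun z => Δt * z) h2
    rw [← mul_assoc, mul_one_div, div_self hΔt, one_mul] at h3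
    linear_combination h3
  have hQ := poissonMom X vth ρ0 β hNx (Cf 0) Ef Φf hdegE hP
  have hQ' : ∑ j ∈ range Nx, pI X j (Cf 0 j * Ef j)
      = β * (∑ i ∈ range Nx, T i) / vth := by
    rw [eq_div_iff hvth]
    linear_combination hQ
  have hT2 : ∑ j ∈ range Nx, (T j + T (j+1)) = 2 * ∑ i ∈ range Nx, T i := by
    rw [Finset.sum_add_distrib, sum_shift Nx T hTper]; ring
  rw [dgTotInt_eq, dgTotInt_eq, Finset.sum_congr rfl key, Finset.sum_add_distrib,
    Finset.sum_add_distrib, ← Finset.mul_sum,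
    telescope' Nx _ (dgGhat_per X hNx vth NH Cf 1), mul_zero, zero_add,
    Finset.sum_sub_distrib, ← Finset.mul_sum, ← Finset.mul_sum, hQ', hT2]
  field_simp
  ring

end DGaux

end DGHelpers4

noncomputable section DGHelpers5

namespace DGaux

variable (X : ℕ → ℝ) {Nx : ℕ}

lemma dgMinus_half_add (a b : ℕ → Polynomial ℝ) (i : ℕ) :
    dgMinus Nx X (fun i => (2⁻¹ : ℝ) • (a i + b i)) i
      = 2⁻¹ * (dgMinus Nx X a i + dgMinus Nx X b i) := by
  unfold dgMinus
  split_ifs <;> simp [Polynomial.eval_smul, smul_eq_mul] <;> ring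

lemma dgPlus_half_add (a b : ℕ → Polynomial ℝ) (i : ℕ) :
    dgPlus Nx X (fun i => (2⁻¹ : ℝ) • (a i + b i)) i
      = 2⁻¹ * (dgPlus Nx X a i + dgPlus Nx X b i) := by
  unfold dgPlus
  split_ifs <;> simp [Polynomial.eval_smul, smul_eq_mul] <;> ring

lemma pI_half_comb (j : ℕ) (a b c : Polynomial ℝ) :
    pI X j (a * c) + pI X j (b * c) = 2 * pI X j (((2⁻¹ : ℝ) • (a + b)) * c) := by
  have h : ((2:ℝ)) • (((2⁻¹ : ℝ) • (a + b)) * c) = a * c + b * c := by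
    rw [smul_mul_assoc, smul_smul]
    norm_num
    rw [add_mul]
  rw [← pI_add, ← h, pI_smul]

end DGaux

end DGHelpers5

noncomputable section DGHelpers6

namespace DGaux

set_option maxHeartbeats 1000000 in
lemma energyStep (X : ℕ → ℝ) (vth ρ0 β Δt : ℝ) (hvth : vth ≠ 0) (hΔt : Δt ≠ 0)
    {k Nx NH : ℕ} (hNx : 1 ≤ Nx)
    (Cf : ℕ → ℕ → Polynomial ℝ)
    (Cm0 Cp0 C2m C2p Em Ep Φm Φp Emid Φmid : ℕ → Polynomial ℝ)
    (hEmid : ∀ i, Emid i = (2⁻¹ : ℝ) • (Em i + Ep i))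
    (hΦmid : ∀ i, Φmid i = (2⁻¹ : ℝ) • (Φm i + Φp i))
    (hdegC1 : ∀ j, (Cf 1 j).natDegree ≤ k)
    (hdegEm : ∀ j, (Em j).natDegree ≤ k) (hdegEp : ∀ j, (Ep j).natDegree ≤ k)
    (hdegΦm : ∀ j, (Φm j).natDegree ≤ k) (hdegΦp : ∀ j, (Φp j).natDegree ≤ k)
    (h0 : ∀ j < Nx, ∀ φ : Polynomial ℝ, φ.natDegree ≤ k →
      (1 / Δt) * ((cellInt X j fun x => (Cp0 j).eval x * φ.eval x)
          - cellInt X j fun x => (Cm0 j).eval x * φ.eval x)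
        + dgA vth NH Nx X Cf 0 j φ = 0)
    (h2 : ∀ j < Nx,
      (1 / Δt) * ((cellInt X j fun x => (C2p j).eval x * (1 : Polynomial ℝ).eval x)
          - cellInt X j fun x => (C2m j).eval x * (1 : Polynomial ℝ).eval x)
        + dgA vth NH Nx X Cf 2 j 1
        + dgB vth β NH Nx X Cf Emid Φmid 2 j 1 = 0)
    (hPm : dgPoisson vth ρ0 β k Nx X Cm0 Em Φm)
    (hPp : dgPoisson vth ρ0 β k Nx X Cp0 Ep Φp) :
    (1/2) * (∑ j ∈ range Nx, cellInt X j fun x =>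
        vth^3 * (Real.sqrt 2 * (C2p j).eval x + (Cp0 j).eval x) + ((Ep j).eval x)^2)
      + (β/2) * ∑ j ∈ range Nx, (dgJump Nx X Φp j)^2
    = (1/2) * (∑ j ∈ range Nx, cellInt X j fun x =>
        vth^3 * (Real.sqrt 2 * (C2m j).eval x + (Cm0 j).eval x) + ((Em j).eval x)^2)
      + (β/2) * ∑ j ∈ range Nx, (dgJump Nx X Φm j)^2 := by
  have hdegΦmid : ∀ j, (Φmid j).natDegree ≤ k := by
    intro j
    rw [hΦmid]
    exact le_trans (Polynomial.natDegree_smul_le _ _)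
      (le_trans (Polynomial.natDegree_add_le _ _) (max_le (hdegΦm j) (hdegΦp j)))
  have hdegD : ∀ j, (Ep j - Em j).natDegree ≤ k := fun j =>
    le_trans (Polynomial.natDegree_sub_le _ _) (max_le (hdegEp j) (hdegEm j))
  have hΦmidM : ∀ i, dgMinus Nx X Φmid i
      = 2⁻¹ * (dgMinus Nx X Φm i + dgMinus Nx X Φp i) := by
    intro i
    rw [show Φmid = fun i => (2⁻¹ : ℝ) • (Φm i + Φp i) from funext hΦmid]
    exact dgMinus_half_add X Φm Φp i
  have hΦmidP : ∀ i, dgPlus Nx X Φmid i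
      = 2⁻¹ * (dgPlus Nx X Φm i + dgPlus Nx X Φp i) := by
    intro i
    rw [show Φmid = fun i => (2⁻¹ : ℝ) • (Φm i + Φp i) from funext hΦmid]
    exact dgPlus_half_add X Φm Φp i
  have hs2 : Real.sqrt 2 * Real.sqrt 2 = 2 := Real.mul_self_sqrt (by norm_num)
  have hsne : Real.sqrt 2 ≠ 0 := by positivity
  -- abbreviations
  set G0 : ℕ → ℝ := dgGhat vth NH Nx X Cf 0 with hG0
  set G2 : ℕ → ℝ := dgGhat vth NH Nx X Cf 2 with hG2
  set S : ℕ → ℝ := fun i =>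
    (dgAvg Nx X (Cf 1) i - dgC1hat vth NH Nx X Cf i) * dgJump Nx X Φmid i with hS
  set SS : ℝ := ∑ i ∈ range Nx, S i with hSS
  set SR : ℝ := ∑ j ∈ range Nx, pI X j (Emid j * Cf 1 j) with hSR
  -- (1) conservation of ∫ C0
  have hG0per : G0 Nx = G0 0 := by
    rw [hG0]; exact dgGhat_per X hNx vth NH Cf 0
  have hG2per : G2 Nx = G2 0 := by
    rw [hG2]; exact dgGhat_per X hNx vth NH Cf 2
  have hSper : S Nx = S 0 := by
    simp only [hS]
    rw [dgAvg_per X hNx, dgC1hat_per X hNx, dgJump_per X hNx]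
  have hA' : ∑ j ∈ range Nx, pI X j (Cp0 j) = ∑ j ∈ range Nx, pI X j (Cm0 j) := by
    have key : ∀ j ∈ range Nx, pI X j (Cp0 j)
        = pI X j (Cm0 j) + Δt * (G0 j - G0 (j+1)) := by
      intro j hj
      have h1 := h0 j (mem_range.mp hj) 1 (by simp)
      rw [dgA_one, cellInt_one, cellInt_one, ← hG0] at h1
      have h3 := congrArg (fun z => Δt * z) h1
      rw [mul_add, ← mul_assoc, mul_one_div, div_self hΔt, one_mul, mul_zero] at h3
      linear_combination h3
    rw [Finset.sum_congr rfl key, Finset.sum_add_distrib, ← Finset.mul_sum,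
      telescope' Nx _ hG0per, mul_zero, add_zero]
  -- (2) the C2 update summed
  have hBv2 : Real.sqrt 2 * vth * ((∑ j ∈ range Nx, pI X j (C2p j))
        - ∑ j ∈ range Nx, pI X j (C2m j)) = 2 * Δt * (SR + SS) := by
    have key : ∀ j ∈ range Nx, pI X j (C2p j)
        = pI X j (C2m j) + (Δt * (G2 j - G2 (j+1))
          + ((Δt * Real.sqrt 2 / vth) * pI X j (Emid j * Cf 1 j)
            + (Δt * (1 / (Real.sqrt 2 * vth))) * (S j + S (j+1)))) := by
      intro j hj
      have h1 := h2 j (mem_range.mp hj)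
      rw [dgA_one, cellInt_one, cellInt_one, ← hG2] at h1
      unfold dgB dgR dgR2 at h1
      rw [if_neg (by norm_num), if_pos rfl] at h1
      rw [cellInt_mul_one] at h1
      simp only [Polynomial.eval_one, mul_one, Nat.cast_ofNat, Nat.reduceSub] at h1
      have h3 := congrArg (fun z => Δt * z) h1
      rw [mul_add, mul_add, ← mul_assoc, mul_one_div, div_self hΔt, one_mul, mul_zero] at h3
      simp only [hS]
      linear_combination h3
    have e1 : ∑ j ∈ range Nx, (S j + S (j+1)) = 2 * SS := by
      rw [Finset.sum_add_distrib, sum_shift Nx S hSper, hSS]; ring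
    have hBsum : (∑ j ∈ range Nx, pI X j (C2p j)) - ∑ j ∈ range Nx, pI X j (C2m j)
        = (Δt * Real.sqrt 2 / vth) * SR + (Δt * (1 / (Real.sqrt 2 * vth))) * (2 * SS) := by
      rw [Finset.sum_congr rfl key, Finset.sum_add_distrib, Finset.sum_add_distrib,
        Finset.sum_add_distrib, ← Finset.mul_sum, ← Finset.mul_sum, ← Finset.mul_sum,
        e1, telescope' Nx _ hG2per, ← hSR, mul_zero]
      ring
    rw [hBsum]
    field_simp
    linear_combination SR * hs2
  -- (3) the C0 update tested against Φmid, summed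
  have hDsum : ∑ j ∈ range Nx, (pI X j (Cp0 j * Φmid j) - pI X j (Cm0 j * Φmid j))
      = -(Δt * vth) * (SR + SS) := by
    set U : ℕ → ℝ := fun i =>
      vth * (dgMinus Nx X (Cf 1) i * dgMinus Nx X Φmid i
        - (dgAvg Nx X Φm i + dgAvg Nx X Φp i) * dgMinus Nx X (Cf 1) i / 2)
      - G0 i * dgMinus Nx X Φmid i with hU
    set V : ℕ → ℝ := fun i =>
      vth * (dgPlus Nx X (Cf 1) i * dgPlus Nx X Φmid i
        - (dgAvg Nx X Φm i + dgAvg Nx X Φp i) * dgPlus Nx X (Cf 1) i / 2)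
      - G0 i * dgPlus Nx X Φmid i with hV
    have hUper : U Nx = U 0 := by
      simp only [hU, hG0]
      rw [dgMinus_per X hNx, dgMinus_per X hNx, dgAvg_per X hNx, dgAvg_per X hNx,
        dgGhat_per X hNx]
    have key : ∀ j ∈ range Nx, pI X j (Cp0 j * Φmid j) - pI X j (Cm0 j * Φmid j)
        = Δt * (-vth * pI X j (Emid j * Cf 1 j)) + (Δt * U (j+1) - Δt * V j) := by
      intro j hj
      have hjlt := mem_range.mp hj
      have h1 := h0 j hjlt (Φmid j) (hdegΦmid j)
      rw [cellInt_mul, cellInt_mul] at h1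
      unfold dgA at h1
      rw [dgG_zero, cellInt_mul, smul_mul_assoc, pI_smul,
        evalM X (Nx := Nx) j Φmid, evalP X (Nx := Nx) hjlt Φmid, ← hG0] at h1
      have hFTC := pI_mul_deriv X j (Cf 1 j) (Φmid j)
      rw [Polynomial.eval_mul, Polynomial.eval_mul, evalM X (Nx := Nx) j (Cf 1),
        evalP X (Nx := Nx) hjlt (Cf 1), evalM X (Nx := Nx) j Φmid,
        evalP X (Nx := Nx) hjlt Φmid] at hFTC
      have hPa := (hPm j hjlt (Cf 1 j) (hdegC1 j)).1
      have hPb := (hPp j hjlt (Cf 1 j) (hdegC1 j)).1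
      rw [cellInt_mul, cellInt_mul, evalM X (Nx := Nx) j (Cf 1),
        evalP X (Nx := Nx) hjlt (Cf 1)] at hPa hPb
      have hcomb1 : pI X j (Φm j * (Cf 1 j).derivative)
            + pI X j (Φp j * (Cf 1 j).derivative)
          = 2 * pI X j (Φmid j * (Cf 1 j).derivative) := by
        rw [hΦmid]
        exact pI_half_comb X j _ _ _
      have hcomb2 : pI X j (Em j * Cf 1 j) + pI X j (Ep j * Cf 1 j)
          = 2 * pI X j (Emid j * Cf 1 j) := by
        rw [hEmid]
        exact pI_half_comb X j _ _ _
      have h3 := congrArg (fun z => Δt * z) h1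
      rw [mul_add, ← mul_assoc, mul_one_div, div_self hΔt, one_mul, mul_zero] at h3
      simp only [hU, hV]
      linear_combination h3 + Δt * vth * hFTC + (Δt * vth / 2) * hcomb1
        - (Δt * vth / 2) * hPa - (Δt * vth / 2) * hPb - (Δt * vth / 2) * hcomb2
    have hUV : (∑ i ∈ range Nx, U i) - ∑ i ∈ range Nx, V i = -vth * SS := by
      rw [← Finset.sum_sub_distrib, hSS, Finset.mul_sum]
      refine Finset.sum_congr rfl fun i _ => ?_
      simp only [hU, hV, hS, hG0]
      unfold dgAvg dgJump
      rw [ghat0 X vth hvth NH Cf i, hΦmidM i, hΦmidP i]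
      ring
    rw [Finset.sum_congr rfl key, Finset.sum_add_distrib, Finset.sum_sub_distrib,
      ← Finset.mul_sum, ← Finset.mul_sum, ← Finset.mul_sum,
      sum_shift Nx U hUper, ← hSR, ← Finset.mul_sum]
    linear_combination Δt * hUV
  -- (4) the field energy identity
  have hFsum : (∑ j ∈ range Nx, pI X j (Ep j * Ep j))
        - (∑ j ∈ range Nx, pI X j (Em j * Em j))
        - 2 * vth * ∑ j ∈ range Nx,
            (pI X j (Cp0 j * Φmid j) - pI X j (Cm0 j * Φmid j))
      = -β * ((∑ i ∈ range Nx, (dgJump Nx X Φp i)^2)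
          - ∑ i ∈ range Nx, (dgJump Nx X Φm i)^2) := by
    set Af : ℕ → ℝ := fun i =>
      2 * ((dgMinus Nx X Ep i - dgMinus Nx X Em i) * dgMinus Nx X Φmid i)
        - (dgAvg Nx X Φm i + dgAvg Nx X Φp i)
            * (dgMinus Nx X Ep i - dgMinus Nx X Em i)
        - 2 * ((dgAvg Nx X Ep i - dgAvg Nx X Em i)
            - β * (dgJump Nx X Φp i - dgJump Nx X Φm i)) * dgMinus Nx X Φmid i
      with hAf
    set Bf : ℕ → ℝ := fun i =>
      2 * ((dgPlus Nx X Ep i - dgPlus Nx X Em i) * dgPlus Nx X Φmid i)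
        - (dgAvg Nx X Φm i + dgAvg Nx X Φp i)
            * (dgPlus Nx X Ep i - dgPlus Nx X Em i)
        - 2 * ((dgAvg Nx X Ep i - dgAvg Nx X Em i)
            - β * (dgJump Nx X Φp i - dgJump Nx X Φm i)) * dgPlus Nx X Φmid i
      with hBf
    have hAfper : Af Nx = Af 0 := by
      simp only [hAf]
      rw [dgMinus_per X hNx, dgMinus_per X hNx, dgMinus_per X hNx,
        dgAvg_per X hNx, dgAvg_per X hNx, dgAvg_per X hNx, dgAvg_per X hNx,
        dgJump_per X hNx, dgJump_per X hNx]
    have key : ∀ j ∈ range Nx,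
        pI X j (Ep j * Ep j) - pI X j (Em j * Em j)
          - 2 * vth * (pI X j (Cp0 j * Φmid j) - pI X j (Cm0 j * Φmid j))
        = Af (j+1) - Bf j := by
      intro j hj
      have hjlt := mem_range.mp hj
      have e1m := (hPm j hjlt (Φmid j) (hdegΦmid j)).2
      have e1p := (hPp j hjlt (Φmid j) (hdegΦmid j)).2
      rw [cellInt_mul, cellInt_poisson_rhs, evalM X (Nx := Nx) j Φmid,
        evalP X (Nx := Nx) hjlt Φmid] at e1m e1p
      have e2m := (hPm j hjlt (Ep j - Em j) (hdegD j)).1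
      have e2p := (hPp j hjlt (Ep j - Em j) (hdegD j)).1
      rw [cellInt_mul, cellInt_mul, Polynomial.eval_sub, Polynomial.eval_sub,
        evalM X (Nx := Nx) j Ep, evalM X (Nx := Nx) j Em,
        evalP X (Nx := Nx) hjlt Ep, evalP X (Nx := Nx) hjlt Em] at e2m e2p
      have hFTC2 := pI_mul_deriv X j (Ep j - Em j) (Φmid j)
      rw [Polynomial.eval_mul, Polynomial.eval_mul, Polynomial.eval_sub,
        Polynomial.eval_sub, evalM X (Nx := Nx) j Ep, evalM X (Nx := Nx) j Em,
        evalP X (Nx := Nx) hjlt Ep, evalP X (Nx := Nx) hjlt Em,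
        evalM X (Nx := Nx) j Φmid, evalP X (Nx := Nx) hjlt Φmid] at hFTC2
      have r1 : pI X j (Em j * (Ep j - Em j)) + pI X j (Ep j * (Ep j - Em j))
          = pI X j (Ep j * Ep j) - pI X j (Em j * Em j) := by
        rw [← pI_add, ← pI_sub]; congr 1; ring
      have r2 : pI X j (Φm j * (Ep j - Em j).derivative)
            + pI X j (Φp j * (Ep j - Em j).derivative)
          = 2 * pI X j (Φmid j * (Ep j - Em j).derivative) := by
        rw [hΦmid]; exact pI_half_comb X j _ _ _
      have r3 : pI X j (Ep j * (Φmid j).derivative) - pI X j (Em j * (Φmid j).derivative)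
          = pI X j ((Ep j - Em j) * (Φmid j).derivative) := by
        rw [← pI_sub]; congr 1; ring
      simp only [hAf, hBf]
      linear_combination -r1 - e2m - e2p + r2 + 2*hFTC2 + 2*r3 + 2*e1p - 2*e1m
    have hAB : (∑ i ∈ range Nx, Af i) - ∑ i ∈ range Nx, Bf i
        = -β * ((∑ i ∈ range Nx, (dgJump Nx X Φp i)^2)
            - ∑ i ∈ range Nx, (dgJump Nx X Φm i)^2) := by
      rw [← Finset.sum_sub_distrib, ← Finset.sum_sub_distrib, Finset.mul_sum]
      refine Finset.sum_congr rfl fun i _ => ?_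
      simp only [hAf, hBf]
      unfold dgAvg dgJump
      rw [hΦmidM i, hΦmidP i]
      ring
    have combine : (∑ j ∈ range Nx, pI X j (Ep j * Ep j))
          - (∑ j ∈ range Nx, pI X j (Em j * Em j))
          - 2 * vth * ∑ j ∈ range Nx,
              (pI X j (Cp0 j * Φmid j) - pI X j (Cm0 j * Φmid j))
        = ∑ j ∈ range Nx, (pI X j (Ep j * Ep j) - pI X j (Em j * Em j)
            - 2 * vth * (pI X j (Cp0 j * Φmid j) - pI X j (Cm0 j * Φmid j))) := by
      simp only [Finset.sum_sub_distrib, ← Finset.mul_sum]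
    rw [combine, Finset.sum_congr rfl key, Finset.sum_sub_distrib,
      sum_shift Nx Af hAfper]
    exact hAB
  -- assembly
  rw [Finset.sum_congr rfl fun j _ => cellInt_energy X vth j (C2p j) (Cp0 j) (Ep j),
    Finset.sum_congr rfl fun j _ => cellInt_energy X vth j (C2m j) (Cm0 j) (Em j)]
  rw [Finset.sum_add_distrib, Finset.sum_add_distrib, ← Finset.mul_sum, ← Finset.mul_sum,
    Finset.sum_add_distrib, Finset.sum_add_distrib, ← Finset.mul_sum, ← Finset.mul_sum]
  linear_combination (vth^2/2) * hBv2 + (vth^3/2) * hA' + (1/2) * hFsum + vth * hDsum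

end DGaux

end DGHelpers6

/-- Conservation of discrete mass, momentum and total energy for the
second-order (two-stage Runge–Kutta) fully discrete DG scheme. -/
theorem dg_rk2_conservation
    (L vth ρ0 β Δt : ℝ) (k Nx NH : ℕ)
    (hL : 0 < L) (hvth : 0 < vth) (hβ : 0 < β) (hΔt : 0 < Δt)
    (hNx : 1 ≤ Nx) (hNH : 3 ≤ NH)
    -- the partition `0 = x_{1/2} < … < x_{Nx+1/2} = L`
    (X : ℕ → ℝ) (hX0 : X 0 = 0) (hXL : X Nx = L)
    (hXmono : ∀ j < Nx, X j < X (j + 1))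
    -- the numerical solution at each time step, cell by cell, together with
    -- the intermediate stage values `C^{(1)}, E^{(1)}, Φ^{(1)}`
    (C C1s : ℕ → ℕ → ℕ → Polynomial ℝ) (E Φ E1 Φ1 : ℕ → ℕ → Polynomial ℝ)
    -- membership in `V_h^k`
    (hdegC : ∀ n m j, (C n m j).natDegree ≤ k)
    (hdegC1s : ∀ n m j, (C1s n m j).natDegree ≤ k)
    (hdegE : ∀ m j, (E m j).natDegree ≤ k)
    (hdegΦ : ∀ m j, (Φ m j).natDegree ≤ k)
    (hdegE1 : ∀ m j, (E1 m j).natDegree ≤ k)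
    (hdegΦ1 : ∀ m j, (Φ1 m j).natDegree ≤ k)
    -- truncation convention `C_{N_H} = 0` (and beyond)
    (hCtop : ∀ n, NH ≤ n → ∀ m j, C n m j = 0)
    (hC1sTop : ∀ n, NH ≤ n → ∀ m j, C1s n m j = 0)
    -- Stage 1 (half step): Euler step for every mode `n ≠ 2`
    (hStage1 : ∀ m : ℕ, ∀ n < NH, n ≠ 2 → ∀ j < Nx,
      ∀ φ : Polynomial ℝ, φ.natDegree ≤ k →
      (2 / Δt) * ((cellInt X j fun x => (C1s n m j).eval x * φ.eval x)
          - cellInt X j fun x => (C n m j).eval x * φ.eval x)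
        + dgA vth NH Nx X (fun p i => C p m i) n j φ
        + dgB vth β NH Nx X (fun p i => C p m i) (E m) (Φ m) n j φ = 0)
    -- the DG Poisson solver for the stage values, with source `C_0^{(1)}`
    (hPoisson1 : ∀ m : ℕ, dgPoisson vth ρ0 β k Nx X (C1s 0 m) (E1 m) (Φ1 m))
    -- Stage 1 update of `C_2`, with `E^{m+1/4} = (E^m + E^{(1)})/2`,
    -- `Φ^{m+1/4} = (Φ^m + Φ^{(1)})/2`
    (hStage1C2 : ∀ m : ℕ, ∀ j < Nx, ∀ φ : Polynomial ℝ, φ.natDegree ≤ k →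
      (2 / Δt) * ((cellInt X j fun x => (C1s 2 m j).eval x * φ.eval x)
          - cellInt X j fun x => (C 2 m j).eval x * φ.eval x)
        + dgA vth NH Nx X (fun p i => C p m i) 2 j φ
        + dgB vth β NH Nx X (fun p i => C p m i)
            (fun i => (2⁻¹ : ℝ) • (E m i + E1 m i))
            (fun i => (2⁻¹ : ℝ) • (Φ m i + Φ1 m i)) 2 j φ = 0)
    -- Stage 2 (full step): for every mode `n ≠ 2`
    (hStage2 : ∀ m : ℕ, ∀ n < NH, n ≠ 2 → ∀ j < Nx,
      ∀ φ : Polynomial ℝ, φ.natDegree ≤ k →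
      (1 / Δt) * ((cellInt X j fun x => (C n (m + 1) j).eval x * φ.eval x)
          - cellInt X j fun x => (C n m j).eval x * φ.eval x)
        + dgA vth NH Nx X (fun p i => C1s p m i) n j φ
        + dgB vth β NH Nx X (fun p i => C1s p m i) (E1 m) (Φ1 m) n j φ = 0)
    -- the DG Poisson solver at every time step, with source `C_0^m`
    (hPoisson : ∀ m : ℕ, dgPoisson vth ρ0 β k Nx X (C 0 m) (E m) (Φ m))
    -- Stage 2 update of `C_2`, with `E^{m+1/2} = (E^m + E^{m+1})/2`,
    -- `Φ^{m+1/2} = (Φ^m + Φ^{m+1})/2`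
    (hStage2C2 : ∀ m : ℕ, ∀ j < Nx, ∀ φ : Polynomial ℝ, φ.natDegree ≤ k →
      (1 / Δt) * ((cellInt X j fun x => (C 2 (m + 1) j).eval x * φ.eval x)
          - cellInt X j fun x => (C 2 m j).eval x * φ.eval x)
        + dgA vth NH Nx X (fun p i => C1s p m i) 2 j φ
        + dgB vth β NH Nx X (fun p i => C1s p m i)
            (fun i => (2⁻¹ : ℝ) • (E m i + E (m + 1) i))
            (fun i => (2⁻¹ : ℝ) • (Φ m i + Φ (m + 1) i)) 2 j φ = 0) :
    ∀ m : ℕ,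
      dgTotInt Nx X (C 0 m) = dgTotInt Nx X (C 0 0)
      ∧ dgTotInt Nx X (C 1 m) = dgTotInt Nx X (C 1 0)
      ∧ dgEnergy vth β Nx X (fun p i => C p m i) (E m) (Φ m)
          = dgEnergy vth β Nx X (fun p i => C p 0 i) (E 0) (Φ 0) := by
  intro m
  induction m with
  | zero => exact ⟨rfl, rfl, rfl⟩
  | succ m ih =>
    obtain ⟨ih0, ih1, ihE⟩ := ih
    have hΔt' : Δt ≠ 0 := ne_of_gt hΔt
    have hvth' : vth ≠ 0 := ne_of_gt hvth
    refine ⟨?_, ?_, ?_⟩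
    · rw [← ih0]
      exact DGaux.massStep X vth β Δt hΔt' (k := k) hNx (fun p i => C1s p m i)
        (E1 m) (Φ1 m) (C 0 m) (C 0 (m+1))
        (fun j hj => hStage2 m 0 (by omega) (by omega) j hj 1 (by simp))
    · rw [← ih1]
      exact DGaux.momStep X vth ρ0 β Δt hvth' hΔt' hNx (fun p i => C1s p m i)
        (E1 m) (Φ1 m) (C 1 m) (C 1 (m+1)) (fun j => hdegE1 m j)
        (fun j hj => hStage2 m 1 (by omega) (by omega) j hj 1 (by simp))
        (hPoisson1 m)
    · rw [← ihE]
      exact DGaux.energyStep X vth ρ0 β Δt hvth' hΔt' hNx (fun p i => C1s p m i)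
        (C 0 m) (C 0 (m+1)) (C 2 m) (C 2 (m+1)) (E m) (E (m+1)) (Φ m) (Φ (m+1))
        (fun i => (2⁻¹ : ℝ) • (E m i + E (m+1) i))
        (fun i => (2⁻¹ : ℝ) • (Φ m i + Φ (m+1) i))
        (fun i => rfl) (fun i => rfl)
        (fun j => hdegC1s 1 m j)
        (fun j => hdegE m j) (fun j => hdegE (m+1) j)
        (fun j => hdegΦ m j) (fun j => hdegΦ (m+1) j)
        (fun j hj φ hφ => by
          have h := hStage2 m 0 (by omega) (by omega) j hj φ hφ
          rwa [DGaux.dgB_zero, add_zero] at h)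
        (fun j hj => hStage2C2 m j hj 1 (by simp))
        (hPoisson m) (hPoisson (m+1))
end
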